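/- arXiv:2212.07804 — 3 statements merged into one kernel-verified Lean document; each statement's English description precedes it below -/
import Mathlib

section
/- Let 1 < p ≤ 2 and let (Ω, F, (F_n), P) be a filtered atomic probability space whose associated collection ℰ supports all initial segments of a generalized Haar system with constant K. Let X be a Banach space and suppose there exists T_p > 0 such that for every f ∈ L^p(Ω, F, P; X): ‖f‖_{L^p(Ω;X)} ≤ T_p (‖E f‖^p + ∑_{n≥1} ‖E[f|F_n] − E[f|F_{n−1}]‖_{L^p(Ω;X)}^p)^{1/p}. Then X has Haar type p with constant T_p · K^{2/p − 1}. -/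
open MeasureTheory ENNReal

noncomputable section

namespace Paper

/-- A filtered atomic probability space structure on `(Ω, m0, P)`:
an increasing sequence of finite measurable partitions `part n` of `Ω` into atoms of
positive measure (with `part 0 = {univ}`, so that the `0`-th σ-algebra is trivial),
generating the ambient σ-algebra, together with a choice `star n A` of a child of
maximal measure for every atom `A` of `part n`. -/
structure FilteredAtomic (Ω : Type*) [m0 : MeasurableSpace Ω] (P : Measure Ω) where
  part : ℕ → Finset (Set Ω)
  part_zero : part 0 = {Set.univ}
  meas : ∀ n, ∀ A ∈ part n, MeasurableSet A
  pos : ∀ n, ∀ A ∈ part n, 0 < P A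
  disj : ∀ n, (part n : Set (Set Ω)).PairwiseDisjoint id
  cover : ∀ n, ⋃₀ (part n : Set (Set Ω)) = Set.univ
  refined : ∀ n, ∀ A ∈ part (n + 1), ∃ B ∈ part n, A ⊆ B
  gen : m0 = ⨆ n, MeasurableSpace.generateFrom (part n : Set (Set Ω))
  star : ℕ → Set Ω → Set Ω
  star_mem : ∀ n, ∀ A ∈ part n, star n A ∈ part (n + 1)
  star_sub : ∀ n, ∀ A ∈ part n, star n A ⊆ A
  star_max : ∀ n, ∀ A ∈ part n, ∀ B ∈ part (n + 1), B ⊆ A → P B ≤ P (star n A)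

variable {Ω : Type*} [m0 : MeasurableSpace Ω] {P : Measure Ω}

/-- The filtration `F_n` generated by the atoms of the `n`-th partition
(`F_0` is the trivial σ-algebra since `part 0 = {univ}`). -/
def FilteredAtomic.filt (F : FilteredAtomic Ω P) (n : ℕ) : MeasurableSpace Ω :=
  MeasurableSpace.generateFrom (F.part n : Set (Set Ω))

/-- The collection 𝒜 of all atoms. -/
def FilteredAtomic.atoms (F : FilteredAtomic Ω P) : Set (Set Ω) :=
  ⋃ n, (F.part n : Set (Set Ω))

/-- The collection 𝒞 = {star A : A ∈ 𝒜}. -/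
def FilteredAtomic.starSets (F : FilteredAtomic Ω P) : Set (Set Ω) :=
  {B | ∃ n, ∃ A ∈ F.part n, B = F.star n A}

/-- The collection ℰ = 𝒜 \ 𝒞. -/
def FilteredAtomic.eColl (F : FilteredAtomic Ω P) : Set (Set Ω) :=
  F.atoms \ F.starSets

/-- The collection ℬ = {Ã : A ∈ 𝒜, P(Ã) > 0}, where Ã = A \ star A. -/
def FilteredAtomic.bColl (F : FilteredAtomic Ω P) : Set (Set Ω) :=
  {S | (∃ n, ∃ A ∈ F.part n, S = A \ F.star n A) ∧ 0 < P S}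

/-- The Carleson constant [[R]] of a collection of sets. -/
def carleson (P : Measure Ω) (R : Set (Set Ω)) : ℝ≥0∞ :=
  ⨆ I ∈ R, (P I)⁻¹ * ∑' J : {J : Set Ω // J ∈ R ∧ J ⊆ I}, P (J : Set Ω)

/-- A collection is nested if any two members are disjoint or comparable. -/
def Nested (R : Set (Set Ω)) : Prop :=
  ∀ A ∈ R, ∀ B ∈ R, (A ∩ B).Nonempty → A ⊆ B ∨ B ⊆ A

/-- `G1 R A`: the maximal members of `R` strictly contained in `A`. -/
def G1 (R : Set (Set Ω)) (A : Set Ω) : Set (Set Ω) :=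
  {B | B ∈ R ∧ B ⊂ A ∧ ∀ C ∈ R, C ⊂ A → B ⊆ C → B = C}

/-- `Gk R k A`: the `k`-th generation of `R` inside `A`. -/
def Gk (R : Set (Set Ω)) : ℕ → Set Ω → Set (Set Ω)
  | 0, A => {A}
  | k + 1, A => ⋃ J ∈ Gk R k A, G1 R J

/-- Martingale difference `E[f|F_{n+1}] - E[f|F_n]`; with the present indexing this is the
paper's `Δ_{n+1} f`, so `fun n => F.mdiff f n` enumerates `Δ_1 f, Δ_2 f, …`. -/
def FilteredAtomic.mdiff (F : FilteredAtomic Ω P) {X : Type*} [NormedAddCommGroup X]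
    [NormedSpace ℝ X] [CompleteSpace X] (f : Ω → X) (n : ℕ) : Ω → X :=
  P[f|F.filt (n + 1)] - P[f|F.filt n]

/-- `(‖E f‖^p + ∑_{n ≥ 1} ‖E[f|F_n] - E[f|F_{n-1}]‖_{L^p}^p)^{1/p}` as an `ℝ≥0∞` number. -/
def FilteredAtomic.mtBound (F : FilteredAtomic Ω P) {X : Type*} [NormedAddCommGroup X]
    [NormedSpace ℝ X] [CompleteSpace X] (f : Ω → X) (p : ℝ) : ℝ≥0∞ :=
  ((‖∫ ω, f ω ∂P‖₊ : ℝ≥0∞) ^ p +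
    ∑' n : ℕ, eLpNorm (F.mdiff f n) (ENNReal.ofReal p) P ^ p) ^ (1 / p)

/-- `M` is a scalar martingale type `p` constant for the filtered space. -/
def ScalarMT (F : FilteredAtomic Ω P) (p M : ℝ) : Prop :=
  1 ≤ M ∧ ∀ g : Ω → ℝ, MemLp g (ENNReal.ofReal p) P →
    eLpNorm g (ENNReal.ofReal p) P ≤ ENNReal.ofReal M * F.mtBound g p

/-- The dyadic interval `[k/2^n, (k+1)/2^n) ⊆ [0,1)` (for `k < 2^n`). -/
def dyadic (n k : ℕ) : Set ℝ := Set.Ico ((k : ℝ) / 2 ^ n) (((k : ℝ) + 1) / 2 ^ n)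

/-- The Haar function `h_I = 1_{I⁺} - 1_{I⁻}` of the dyadic interval `I = [k/2^n, (k+1)/2^n)`. -/
def haarFn (n k : ℕ) : ℝ → ℝ :=
  (dyadic (n + 1) (2 * k)).indicator 1 - (dyadic (n + 1) (2 * k + 1)).indicator 1

/-- `X` has Haar type `p` with constant `C`: for every finitely supported family of vectors
indexed by dyadic subintervals of `[0,1)` (encoded as pairs `(n,k)` with `k < 2^n`),
`‖∑ x_I h_I‖_{L^p([0,1);X)} ≤ C (∑ ‖x_I‖^p |I|)^{1/p}`. -/
def HaarTypeWith (X : Type*) [NormedAddCommGroup X] [NormedSpace ℝ X] (p C : ℝ) : Prop :=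
  ∀ s : Finset (ℕ × ℕ), (∀ q ∈ s, q.2 < 2 ^ q.1) → ∀ x : ℕ × ℕ → X,
    (∫ t in Set.Ico (0 : ℝ) 1, ‖∑ q ∈ s, haarFn q.1 q.2 t • x q‖ ^ p) ^ (1 / p) ≤
      C * (∑ q ∈ s, ‖x q‖ ^ p * ((2 : ℝ) ^ q.1)⁻¹) ^ (1 / p)

/-- The order `≺` on atoms: earlier generation first, and within a generation larger
measure first. -/
def Prec (F : FilteredAtomic Ω P) (B₁ B₂ : Set Ω) : Prop :=
  ∃ l m : ℕ, B₁ ∈ F.part l ∧ B₂ ∈ F.part m ∧ (l < m ∨ (l = m ∧ P B₂ < P B₁))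

/-- `U_j = {B ∈ G_1(ℰ, Y_{j-1}) : B ≺ Y_j}`. -/
def Uset (F : FilteredAtomic Ω P) (Y : ℕ → Set Ω) (j : ℕ) : Set (Set Ω) :=
  {B | B ∈ G1 F.eColl (Y (j - 1)) ∧ Prec F B (Y j)}

/-- The sequence `Y` satisfies condition `D_m(A)`. -/
def CondD (F : FilteredAtomic Ω P) (A : Set Ω) (Y : ℕ → Set Ω) (m : ℕ) : Prop :=
  Y 0 = A ∧ (∀ j ∈ Finset.Icc 1 m, Y j ∈ G1 F.eColl (Y (j - 1))) ∧
    ∑ j ∈ Finset.Icc 1 m, P (⋃₀ Uset F Y j) ≤ 2⁻¹ * P A ∧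
    2⁻¹ * P A ≤ P (Y m) + ∑ j ∈ Finset.Icc 1 m, P (⋃₀ Uset F Y j)

/-- The collection ℰ supports all initial segments of a generalized Haar system with
constant `K`.  Dyadic intervals in `𝒟_n` are encoded as pairs `(j,k)`, `j ≤ n`, `k < 2^j`,
corresponding to `[k/2^j, (k+1)/2^j)`; `ε = δ·2^{-n-1}`. -/
def SupportsHaar (F : FilteredAtomic Ω P) (K : ℝ) : Prop :=
  0 < K ∧ ∀ (n : ℕ) (δ : ℝ), 0 < δ →
    ∃ (C : ℕ × ℕ → Set (Set Ω)) (g : ℕ × ℕ → Ω → ℝ) (A0 : Set Ω) (S : ℕ),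
      A0 ∈ F.eColl ∧
      -- (A1)
      C (0, 0) = {A0} ∧
      -- (A2)
      (∀ j k, j ≤ n → k < 2 ^ j → C (j, k) ⊆ {A | A ∈ F.eColl ∧ A ⊆ A0}) ∧
      -- (A3)
      (∀ j k, j ≤ n → k < 2 ^ j → (C (j, k)).PairwiseDisjoint id) ∧
      -- (A4)
      (∀ j k l i, j ≤ n → k < 2 ^ j → l ≤ n → i < 2 ^ l →
        ((⋃₀ C (j, k) ⊆ ⋃₀ C (l, i) ↔ dyadic j k ⊆ dyadic l i) ∧
          ((⋃₀ C (j, k) ∩ ⋃₀ C (l, i)).Nonempty ↔ (dyadic j k ∩ dyadic l i).Nonempty))) ∧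
      -- (A5)
      (∀ j k, j + 1 ≤ n → k < 2 ^ j →
        (∀ ω, g (j, k) ω ∈ Set.Icc (-1 : ℝ) 1) ∧
        Function.support (g (j, k)) ⊆ ⋃₀ C (j, k) ∧
        ⋃₀ C (j + 1, 2 * k) ⊆ {ω | g (j, k) ω = 1} ∧
        ⋃₀ C (j + 1, 2 * k + 1) ⊆ {ω | g (j, k) ω = -1}) ∧
      -- (A6)
      (∀ j k, j ≤ n → k < 2 ^ j → ∀ A ∈ C (j, k), MeasurableSet[F.filt S] A) ∧
      -- (A7)
      (∀ j k, j + 1 ≤ n → k < 2 ^ j → Measurable[F.filt S] (g (j, k))) ∧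
      -- (A8)
      (∀ A ∈ F.part S, ∀ m, 1 ≤ m → m ≤ S →
        ∀ j k j' k', j + 1 ≤ n → k < 2 ^ j → j' + 1 ≤ n → k' < 2 ^ j' →
          ¬ F.mdiff (g (j, k)) (m - 1) =ᵐ[P.restrict A] (0 : Ω → ℝ) →
          ¬ F.mdiff (g (j', k')) (m - 1) =ᵐ[P.restrict A] (0 : Ω → ℝ) →
          (j, k) = (j', k')) ∧
      -- (A9)
      (∀ j k, j + 1 ≤ n → k < 2 ^ j →
        ∑' i : ℕ, eLpNorm (F.mdiff (g (j, k)) i) 1 P ≤ ENNReal.ofReal K * P (⋃₀ C (j, k))) ∧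
      -- (A10)
      (∀ j k, j ≤ n → k < 2 ^ j →
        ENNReal.ofReal (((2 : ℝ) ^ j)⁻¹ - 2 * (δ * ((2 : ℝ) ^ (n + 1))⁻¹)) * P A0 ≤
            P (⋃₀ C (j, k)) ∧
          P (⋃₀ C (j, k)) ≤ ENNReal.ofReal (((2 : ℝ) ^ j)⁻¹) * P A0)

section Basic

variable {Ω : Type*} [m0 : MeasurableSpace Ω] {P : Measure Ω}

theorem FilteredAtomic.filt_le (F : FilteredAtomic Ω P) (n : ℕ) : F.filt n ≤ m0 := by
  conv_rhs => rw [F.gen]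
  exact le_iSup (fun n => MeasurableSpace.generateFrom (F.part n : Set (Set Ω))) n

theorem FilteredAtomic.measurableSet_filt (F : FilteredAtomic Ω P) {n : ℕ} {A : Set Ω}
    (hA : A ∈ F.part n) : MeasurableSet[F.filt n] A :=
  MeasurableSpace.measurableSet_generateFrom (by exact_mod_cast hA)

theorem FilteredAtomic.eq_of_mem_of_mem (F : FilteredAtomic Ω P) {n : ℕ} {A B : Set Ω}
    (hA : A ∈ F.part n) (hB : B ∈ F.part n) {ω : Ω} (hωA : ω ∈ A) (hωB : ω ∈ B) : A = B := by
  by_contra hne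
  have : ω ∈ (∅ : Set Ω) := (F.disj n hA hB hne).inter_eq ▸ ⟨hωA, hωB⟩
  exact this

theorem FilteredAtomic.exists_mem_part (F : FilteredAtomic Ω P) (n : ℕ) (ω : Ω) :
    ∃ A ∈ F.part n, ω ∈ A := by
  have := F.cover n
  have hω : ω ∈ ⋃₀ (F.part n : Set (Set Ω)) := this ▸ Set.mem_univ ω
  obtain ⟨A, hA, hωA⟩ := hω
  exact ⟨A, by exact_mod_cast hA, hωA⟩

theorem FilteredAtomic.atom_eq_sUnion (F : FilteredAtomic Ω P) {n : ℕ} {A : Set Ω}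
    (hA : A ∈ F.part n) :
    A = ⋃₀ {B | B ∈ F.part (n + 1) ∧ B ⊆ A} := by
  apply Set.Subset.antisymm
  · intro ω hω
    obtain ⟨B, hB, hωB⟩ := F.exists_mem_part (n + 1) ω
    obtain ⟨B', hB', hBB'⟩ := F.refined n B hB
    have : B' = A := F.eq_of_mem_of_mem hB' hA (hBB' hωB) hω
    exact ⟨B, ⟨hB, this ▸ hBB'⟩, hωB⟩
  · rintro ω ⟨B, ⟨_, hBA⟩, hωB⟩
    exact hBA hωB

theorem FilteredAtomic.filt_mono (F : FilteredAtomic Ω P) : Monotone F.filt := by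
  apply monotone_nat_of_le_succ
  intro n
  apply MeasurableSpace.generateFrom_le
  intro A hA
  rw [F.atom_eq_sUnion (by exact_mod_cast hA : A ∈ F.part n)]
  apply Set.Finite.measurableSet_sUnion
  · exact (F.part (n + 1)).finite_toSet.subset (fun B hB => hB.1)
  · exact fun B hB => F.measurableSet_filt hB.1

theorem FilteredAtomic.filt_zero (F : FilteredAtomic Ω P) : F.filt 0 = ⊥ := by
  apply le_antisymm _ bot_le
  apply MeasurableSpace.generateFrom_le
  intro A hA
  rw [F.part_zero] at hA
  simp only [Finset.coe_singleton, Set.mem_singleton_iff] at hA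
  subst hA
  exact MeasurableSet.univ

/-- every set measurable w.r.t. `filt n` contains each atom or is disjoint from it. -/
theorem FilteredAtomic.subset_or_disjoint (F : FilteredAtomic Ω P) {n : ℕ} {s : Set Ω}
    (hs : MeasurableSet[F.filt n] s) : ∀ A ∈ F.part n, A ⊆ s ∨ Disjoint A s := by
  have : ∀ (t : Set Ω), MeasurableSet[F.filt n] t →
      ∀ A ∈ F.part n, A ⊆ t ∨ Disjoint A t := by
    intro t ht
    induction ht with
    | basic u hu =>
      intro A hA
      rcases eq_or_ne A u with rfl | hne
      · exact Or.inl subset_rfl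
      · exact Or.inr (F.disj n hA (by exact_mod_cast hu) hne)
    | empty => exact fun A _ => Or.inr disjoint_bot_right
    | compl u _ ih =>
      intro A hA
      rcases ih A hA with h | h
      · exact Or.inr (Set.disjoint_compl_right_iff_subset.mpr h)
      · exact Or.inl (Set.subset_compl_iff_disjoint_right.mpr h)
    | iUnion u _ ih =>
      intro A hA
      by_cases h : ∃ i, A ⊆ u i
      · obtain ⟨i, hi⟩ := h
        exact Or.inl (hi.trans (Set.subset_iUnion u i))
      · push_neg at h
        refine Or.inr (Set.disjoint_iUnion_right.mpr fun i => ?_)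
        rcases ih i A hA with h' | h'
        · exact absurd h' (h i)
        · exact h'
  exact this s hs

end Basic
section Condexp

variable {Ω : Type*} [m0 : MeasurableSpace Ω] {P : Measure Ω} [IsProbabilityMeasure P]
variable {X : Type*} [NormedAddCommGroup X] [NormedSpace ℝ X] [CompleteSpace X]

theorem FilteredAtomic.sigmaFiniteTrim (F : FilteredAtomic Ω P) (n : ℕ) :
    SigmaFinite (P.trim (F.filt_le n)) := by
  haveI := isFiniteMeasure_trim (μ := P) (F.filt_le n)
  infer_instance

theorem integrable_of_bound {f : Ω → X} (hf : AEStronglyMeasurable f P) (c : ℝ)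
    (hc : ∀ ω, ‖f ω‖ ≤ c) : Integrable f P :=
  (memLp_top_of_bound hf c (Filter.Eventually.of_forall hc)).integrable le_top

theorem FilteredAtomic.condexp_smul_const (F : FilteredAtomic Ω P) {g : Ω → ℝ}
    (hg : Integrable g P) (x : X) (n : ℕ) :
    P[fun ω => g ω • x|F.filt n] =ᵐ[P] fun ω => (P[g|F.filt n]) ω • x := by
  haveI := F.sigmaFiniteTrim n
  refine (ae_eq_condExp_of_forall_setIntegral_eq (F.filt_le n) (hg.smul_const x) ?_ ?_ ?_).symm
  · exact fun s _ _ => (integrable_condExp.smul_const x).integrableOn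
  · intro s hs _
    rw [integral_smul_const, integral_smul_const,
      setIntegral_condExp (F.filt_le n) hg hs]
  · exact (stronglyMeasurable_condExp.smul_const x).aestronglyMeasurable

theorem FilteredAtomic.mdiff_smul_const (F : FilteredAtomic Ω P) {g : Ω → ℝ}
    (hg : Integrable g P) (x : X) (n : ℕ) :
    F.mdiff (fun ω => g ω • x) n =ᵐ[P] fun ω => F.mdiff g n ω • x := by
  filter_upwards [F.condexp_smul_const hg x (n + 1), F.condexp_smul_const hg x n] with ω h1 h2
  simp only [FilteredAtomic.mdiff, Pi.sub_apply, h1, h2, sub_smul]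

theorem FilteredAtomic.mdiff_finset_sum (F : FilteredAtomic Ω P) {ι : Type*} (s : Finset ι)
    (f : ι → Ω → X) (hf : ∀ i ∈ s, Integrable (f i) P) (n : ℕ) :
    F.mdiff (fun ω => ∑ i ∈ s, f i ω) n =ᵐ[P] fun ω => ∑ i ∈ s, F.mdiff (f i) n ω := by
  haveI := F.sigmaFiniteTrim n
  haveI := F.sigmaFiniteTrim (n + 1)
  have h1 := condExp_finset_sum (m := F.filt (n + 1)) (μ := P) hf
  have h2 := condExp_finset_sum (m := F.filt n) (μ := P) hf
  have he : (fun ω => ∑ i ∈ s, f i ω) = ∑ i ∈ s, f i := by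
    funext ω; simp
  rw [FilteredAtomic.mdiff, he]
  filter_upwards [h1, h2] with ω e1 e2
  simp only [Pi.sub_apply, e1, e2, Finset.sum_apply, FilteredAtomic.mdiff,
    Finset.sum_sub_distrib]

theorem FilteredAtomic.mdiff_eq_zero (F : FilteredAtomic Ω P) {S : ℕ} {f : Ω → X}
    (hS : StronglyMeasurable[F.filt S] f) (hf : Integrable f P) {m : ℕ} (hm : S ≤ m) :
    F.mdiff f m = 0 := by
  haveI := F.sigmaFiniteTrim m
  haveI := F.sigmaFiniteTrim (m + 1)
  rw [FilteredAtomic.mdiff,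
    condExp_of_stronglyMeasurable (F.filt_le (m + 1))
      (hS.mono (F.filt_mono (hm.trans (Nat.le_succ m)))) hf,
    condExp_of_stronglyMeasurable (F.filt_le m) (hS.mono (F.filt_mono hm)) hf]
  simp

theorem FilteredAtomic.abs_condexp_le (F : FilteredAtomic Ω P) {g : Ω → ℝ}
    (hg : Integrable g P) {c : ℝ} (hgc : ∀ ω, |g ω| ≤ c) (n : ℕ) :
    ∀ᵐ ω ∂P, |(P[g|F.filt n]) ω| ≤ c := by
  haveI := F.sigmaFiniteTrim n
  have h1 := condExp_mono (m := F.filt n) hg (integrable_const c)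
    (Filter.Eventually.of_forall fun ω => (abs_le.1 (hgc ω)).2)
  have h2 := condExp_mono (m := F.filt n) (integrable_const (-c)) hg
    (Filter.Eventually.of_forall fun ω => (abs_le.1 (hgc ω)).1)
  rw [condExp_const (F.filt_le n)] at h1 h2
  filter_upwards [h1, h2] with ω e1 e2
  exact abs_le.2 ⟨e2, e1⟩

theorem FilteredAtomic.abs_mdiff_le (F : FilteredAtomic Ω P) {g : Ω → ℝ}
    (hg : Integrable g P) {c : ℝ} (hgc : ∀ ω, |g ω| ≤ c) (n : ℕ) :
    ∀ᵐ ω ∂P, |F.mdiff g n ω| ≤ 2 * c := by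
  filter_upwards [F.abs_condexp_le hg hgc (n + 1), F.abs_condexp_le hg hgc n] with ω h1 h2
  calc |F.mdiff g n ω| ≤ |(P[g|F.filt (n+1)]) ω| + |(P[g|F.filt n]) ω| := abs_sub _ _
  _ ≤ 2 * c := by linarith

end Condexp
section L2

set_option linter.unusedSectionVars false

variable {Ω : Type*} [m0 : MeasurableSpace Ω] {P : Measure Ω} [IsProbabilityMeasure P]

theorem FilteredAtomic.integrable_mdiff (F : FilteredAtomic Ω P) (g : Ω → ℝ) (k : ℕ) :
    Integrable (F.mdiff g k) P :=
  integrable_condExp.sub integrable_condExp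

theorem FilteredAtomic.integral_mul_mdiff (F : FilteredAtomic Ω P) {g : Ω → ℝ}
    {h : Ω → ℝ} {k : ℕ} (hh : StronglyMeasurable[F.filt k] h) {c : ℝ}
    (hhb : ∀ᵐ ω ∂P, |h ω| ≤ c) :
    ∫ ω, h ω * F.mdiff g k ω ∂P = 0 := by
  haveI := F.sigmaFiniteTrim k
  haveI := F.sigmaFiniteTrim (k + 1)
  have hΔint : Integrable (F.mdiff g k) P := F.integrable_mdiff g k
  have hprod : Integrable (fun ω => h ω * F.mdiff g k ω) P :=
    hΔint.bdd_mul ((hh.mono (F.filt_le k)).aestronglyMeasurable)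
      (by filter_upwards [hhb] with ω hω; simpa using hω)
  have key : P[(h * F.mdiff g k)|F.filt k] =ᵐ[P] h * P[F.mdiff g k|F.filt k] :=
    condExp_mul_of_stronglyMeasurable_left hh (by exact hprod) hΔint
  have hzero : P[F.mdiff g k|F.filt k] =ᵐ[P] 0 := by
    have h1 : P[F.mdiff g k|F.filt k] =ᵐ[P]
        P[P[g|F.filt (k+1)]|F.filt k] - P[P[g|F.filt k]|F.filt k] :=
      condExp_sub integrable_condExp integrable_condExp _
    have h2 : P[P[g|F.filt (k+1)]|F.filt k] =ᵐ[P] P[g|F.filt k] :=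
      condExp_condExp_of_le (F.filt_mono (Nat.le_succ k)) (F.filt_le (k+1))
    have h3 : P[P[g|F.filt k]|F.filt k] = P[g|F.filt k] :=
      condExp_of_stronglyMeasurable (F.filt_le k) stronglyMeasurable_condExp
        integrable_condExp
    filter_upwards [h1, h2] with ω e1 e2
    simp [e1, e2, h3]
  have : ∫ ω, h ω * F.mdiff g k ω ∂P = ∫ ω, (P[(h * F.mdiff g k)|F.filt k]) ω ∂P :=
    (integral_condExp (F.filt_le k)).symm
  rw [this]
  have : P[(h * F.mdiff g k)|F.filt k] =ᵐ[P] 0 := by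
    filter_upwards [key, hzero] with ω e1 e2
    simp [e1, Pi.mul_apply, e2]
  rw [integral_congr_ae this]
  simp

/-- The key scalar L² estimate: `∑_{m<S} ∫ (Δ_m g)² ≤ ∫ g²`. -/
theorem FilteredAtomic.sum_integral_mdiff_sq_le (F : FilteredAtomic Ω P) {S : ℕ} {g : Ω → ℝ}
    (hmeas : StronglyMeasurable[F.filt S] g) (hb : ∀ ω, |g ω| ≤ 1) :
    ∑ m ∈ Finset.range S, ∫ ω, (F.mdiff g m ω) ^ 2 ∂P ≤ ∫ ω, (g ω) ^ 2 ∂P := by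
  have hgint : Integrable g P :=
    integrable_of_bound (hmeas.mono (F.filt_le S)).aestronglyMeasurable 1
      (by simpa using hb)
  set T : ℕ → Ω → ℝ := fun k ω => (P[g|F.filt k]) ω - (P[g|F.filt 0]) ω with hT
  have hTsm : ∀ k, StronglyMeasurable[F.filt k] (T k) := fun k =>
    stronglyMeasurable_condExp.sub
      (stronglyMeasurable_condExp.mono (F.filt_mono (Nat.zero_le k)))
  have hTb : ∀ k, ∀ᵐ ω ∂P, |T k ω| ≤ 2 := by
    intro k
    filter_upwards [F.abs_condexp_le hgint hb k, F.abs_condexp_le hgint hb 0] with ω h1 h2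
    calc |T k ω| ≤ |(P[g|F.filt k]) ω| + |(P[g|F.filt 0]) ω| := abs_sub _ _
    _ ≤ 2 := by linarith
  have hTint : ∀ k, Integrable (T k) P := fun k => integrable_condExp.sub integrable_condExp
  have hΔb : ∀ m, ∀ᵐ ω ∂P, |F.mdiff g m ω| ≤ 2 := by
    intro m
    have := F.abs_mdiff_le hgint hb m
    simpa using this
  have hsq_int : ∀ (h : Ω → ℝ) (h' : Ω → ℝ), Integrable h' P → AEStronglyMeasurable h P →
      (∀ᵐ ω ∂P, |h ω| ≤ 2) → Integrable (fun ω => h ω * h' ω) P := by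
    intro h h' h'int hsm hbd
    exact h'int.bdd_mul hsm (by filter_upwards [hbd] with ω hω; simpa using hω)
  -- Step 1: ∫ (T k)² = ∑_{m<k} ∫ Δ_m²
  have step1 : ∀ k, ∫ ω, (T k ω) ^ 2 ∂P =
      ∑ m ∈ Finset.range k, ∫ ω, (F.mdiff g m ω) ^ 2 ∂P := by
    intro k
    induction k with
    | zero =>
      simp [hT]
    | succ k ih =>
      have hTsucc : ∀ ω, T (k + 1) ω = T k ω + F.mdiff g k ω := by
        intro ω
        simp only [hT, FilteredAtomic.mdiff, Pi.sub_apply]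
        ring
      have expand : ∀ ω, (T (k+1) ω) ^ 2 =
          (T k ω) ^ 2 + (2 * (T k ω * F.mdiff g k ω) + (F.mdiff g k ω) ^ 2) := by
        intro ω; rw [hTsucc ω]; ring
      have i1 : Integrable (fun ω => (T k ω) ^ 2) P := by
        have := hsq_int (T k) (T k) (hTint k)
          ((hTsm k).mono (F.filt_le k)).aestronglyMeasurable (hTb k)
        simpa [pow_two] using this
      have i2 : Integrable (fun ω => T k ω * F.mdiff g k ω) P :=
        hsq_int (T k) (F.mdiff g k) (F.integrable_mdiff g k)
          ((hTsm k).mono (F.filt_le k)).aestronglyMeasurable (hTb k)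
      have i3 : Integrable (fun ω => (F.mdiff g k ω) ^ 2) P := by
        have := hsq_int (F.mdiff g k) (F.mdiff g k) (F.integrable_mdiff g k)
          ((F.integrable_mdiff g k).aestronglyMeasurable) (hΔb k)
        simpa [pow_two] using this
      calc ∫ ω, (T (k+1) ω) ^ 2 ∂P
          = ∫ ω, ((T k ω) ^ 2 + (2 * (T k ω * F.mdiff g k ω) + (F.mdiff g k ω) ^ 2)) ∂P := by
            exact integral_congr_ae (Filter.Eventually.of_forall expand)
        _ = ∫ ω, (T k ω) ^ 2 ∂P +
            ∫ ω, (2 * (T k ω * F.mdiff g k ω) + (F.mdiff g k ω) ^ 2) ∂P := by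
            exact integral_add i1 (((i2.const_mul 2)).add i3)
        _ = ∫ ω, (T k ω) ^ 2 ∂P +
            (2 * ∫ ω, T k ω * F.mdiff g k ω ∂P + ∫ ω, (F.mdiff g k ω) ^ 2 ∂P) := by
            rw [integral_add (i2.const_mul 2) i3, integral_const_mul]
        _ = ∫ ω, (T k ω) ^ 2 ∂P + ∫ ω, (F.mdiff g k ω) ^ 2 ∂P := by
            rw [F.integral_mul_mdiff (g := g) (hTsm k) (hTb k)]; ring
        _ = ∑ m ∈ Finset.range (k+1), ∫ ω, (F.mdiff g m ω) ^ 2 ∂P := by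
            rw [ih, Finset.sum_range_succ]
  -- Step 2: T S = g - ∫ g pointwise
  have hTS : ∀ ω, T S ω = g ω - ∫ ω', g ω' ∂P := by
    intro ω
    have h1 : P[g|F.filt S] = g :=
      condExp_of_stronglyMeasurable (F.filt_le S) hmeas hgint
    have h2 : P[g|F.filt 0] = fun _ => ∫ ω', g ω' ∂P := by
      rw [F.filt_zero]; exact condExp_bot g
    simp [hT, h1, h2]
  -- Step 3: ∫ (g - c)² ≤ ∫ g²
  have hg2int : Integrable (fun ω => (g ω) ^ 2) P := by
    refine integrable_of_bound ?_ 1 ?_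
    · exact (((hmeas.mono (F.filt_le S)).mul
        (hmeas.mono (F.filt_le S))).aestronglyMeasurable).congr
        (Filter.Eventually.of_forall (fun ω => by simp [pow_two]))
    · intro ω
      have := hb ω
      simp only [Real.norm_eq_abs, abs_pow]
      nlinarith [abs_nonneg (g ω)]
  have step3 : ∫ ω, (T S ω) ^ 2 ∂P ≤ ∫ ω, (g ω) ^ 2 ∂P := by
    set c := ∫ ω', g ω' ∂P with hc
    have expand : ∀ ω, (T S ω) ^ 2 = (g ω) ^ 2 - (2 * c) * g ω + c ^ 2 := by
      intro ω; rw [hTS ω]; ring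
    rw [integral_congr_ae (Filter.Eventually.of_forall expand)]
    have iA : Integrable (fun ω => g ω ^ 2 - 2 * c * g ω) P := by
      have := hg2int.sub (hgint.const_mul (2*c))
      exact this
    rw [integral_add iA (integrable_const _),
      integral_sub hg2int (hgint.const_mul (2*c)), integral_const_mul, integral_const]
    simp only [measure_univ, probReal_univ, ENNReal.toReal_one, smul_eq_mul, one_mul, ← hc]
    nlinarith [sq_nonneg c]
  rw [← step1 S]
  exact step3

/-- `∫ g² ≤ P U` when `|g| ≤ 1` and `supp g ⊆ U`. -/
theorem FilteredAtomic.integral_sq_le (F : FilteredAtomic Ω P) {g : Ω → ℝ}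
    (hgsm : AEStronglyMeasurable g P) (hb : ∀ ω, |g ω| ≤ 1)
    {U : Set Ω} (hU : MeasurableSet U) (hsupp : Function.support g ⊆ U) :
    ∫ ω, (g ω) ^ 2 ∂P ≤ (P U).toReal := by
  have hg2int : Integrable (fun ω => (g ω) ^ 2) P := by
    refine integrable_of_bound ?_ 1 ?_
    · exact ((hgsm.mul hgsm)).congr
        (Filter.Eventually.of_forall (fun ω => by simp [pow_two]))
    · intro ω
      have := hb ω
      simp only [Real.norm_eq_abs, abs_pow]
      nlinarith [abs_nonneg (g ω)]
  have hle : ∀ ω, (g ω) ^ 2 ≤ U.indicator (fun _ => (1:ℝ)) ω := by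
    intro ω
    by_cases h : g ω = 0
    · simp [h]
      exact Set.indicator_nonneg (fun _ _ => zero_le_one) ω
    · have hωU : ω ∈ U := hsupp h
      rw [Set.indicator_of_mem hωU]
      have := hb ω
      nlinarith [abs_nonneg (g ω), sq_abs (g ω)]
  calc ∫ ω, (g ω) ^ 2 ∂P ≤ ∫ ω, U.indicator (fun _ => (1:ℝ)) ω ∂P := by
        refine integral_mono hg2int ?_ hle
        exact (integrable_const (1:ℝ)).indicator hU
  _ = (P U).toReal := by
        rw [integral_indicator hU]
        simp
        rfl
end L2
section Interp

set_option linter.unusedSectionVars false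

/-- Interpolation Hölder: `∫ u^a v^b ≤ (∫u)^a (∫v)^b` for `a + b = 1`. -/
theorem lintegral_rpow_interp {α : Type*} [MeasurableSpace α] (μ : Measure α)
    {a b : ℝ} (ha : 0 ≤ a) (hb : 0 < b) (hab : a + b = 1)
    {u v : α → ℝ≥0∞} (hu : AEMeasurable u μ) (hv : AEMeasurable v μ) :
    ∫⁻ x, (u x) ^ a * (v x) ^ b ∂μ ≤ (∫⁻ x, u x ∂μ) ^ a * (∫⁻ x, v x ∂μ) ^ b := by
  rcases ha.eq_or_lt with rfl | ha'
  · have hb1 : b = 1 := by linarith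
    subst hb1
    simp [ENNReal.rpow_one]
  · have hb1 : b < 1 := by linarith
    have ha1 : a < 1 := by linarith
    have hconj : (1/a).HolderConjugate (1/b) := by
      rw [Real.holderConjugate_iff]
      constructor
      · rw [one_div]
        exact (one_lt_inv₀ ha').mpr ha1
      · rw [one_div, one_div, inv_inv, inv_inv]
        exact hab
    have hua : AEMeasurable (fun x => (u x) ^ a) μ := hu.pow aemeasurable_const
    have hvb : AEMeasurable (fun x => (v x) ^ b) μ := hv.pow aemeasurable_const
    have key := ENNReal.lintegral_mul_le_Lp_mul_Lq μ hconj hua hvb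
    simp only [Pi.mul_apply] at key
    have e1 : ∀ x, ((u x) ^ a) ^ (1/a) = u x := fun x => by
      rw [← ENNReal.rpow_mul, mul_one_div_cancel (ne_of_gt ha'), ENNReal.rpow_one]
    have e2 : ∀ x, ((v x) ^ b) ^ (1/b) = v x := fun x => by
      rw [← ENNReal.rpow_mul, mul_one_div_cancel (ne_of_gt hb), ENNReal.rpow_one]
    rw [lintegral_congr e1, lintegral_congr e2, one_div_one_div, one_div_one_div] at key
    exact key

/-- Pointwise: `f^p = f^(2-p) * (f^2)^(p-1)` in `ℝ≥0∞`. -/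
theorem rpow_interp_split (f : ℝ≥0∞) {p : ℝ} (hp1 : 1 ≤ p) (hp2 : p ≤ 2) :
    f ^ p = f ^ (2 - p) * (f ^ (2:ℝ)) ^ (p - 1) := by
  rw [← ENNReal.rpow_mul]
  rw [← ENNReal.rpow_add_of_nonneg (2 - p) (2 * (p - 1)) (by linarith) (by linarith)]
  ring_nf

end Interp
section KeyScalar

set_option linter.unusedSectionVars false

variable {Ω : Type*} [m0 : MeasurableSpace Ω] {P : Measure Ω} [IsProbabilityMeasure P]

theorem ennnorm_rpow_two (r : ℝ) :
    (‖r‖₊ : ℝ≥0∞) ^ (2:ℝ) = ENNReal.ofReal (r ^ 2) := by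
  rw [show (2:ℝ) = ((2:ℕ):ℝ) by norm_num, ENNReal.rpow_natCast,
    ← enorm_eq_nnnorm, Real.enorm_eq_ofReal_abs, ← ENNReal.ofReal_pow (abs_nonneg r), sq_abs]

theorem FilteredAtomic.stronglyMeasurable_mdiff (F : FilteredAtomic Ω P) (g : Ω → ℝ) (m : ℕ) :
    StronglyMeasurable (F.mdiff g m) :=
  ((stronglyMeasurable_condExp.mono (F.filt_le (m+1))).sub
    (stronglyMeasurable_condExp.mono (F.filt_le m)))

theorem FilteredAtomic.tsum_lintegral_mdiff_rpow_le (F : FilteredAtomic Ω P) {p : ℝ}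
    (hp1 : 1 < p) (hp2 : p ≤ 2) {S : ℕ} {g : Ω → ℝ}
    (hmeas : StronglyMeasurable[F.filt S] g) (hb : ∀ ω, |g ω| ≤ 1)
    {U : Set Ω} (hU : MeasurableSet U) (hsupp : Function.support g ⊆ U)
    {K : ℝ≥0∞} (hK9 : ∑' i, eLpNorm (F.mdiff g i) 1 P ≤ K * P U) :
    ∑' m, ∫⁻ ω, (‖F.mdiff g m ω‖₊ : ℝ≥0∞) ^ p ∂P ≤ K ^ (2 - p) * P U := by
  have hgint : Integrable g P :=
    integrable_of_bound (hmeas.mono (F.filt_le S)).aestronglyMeasurable 1 (by simpa using hb)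
  set A : ℕ → ℝ≥0∞ := fun m => ∫⁻ ω, (‖F.mdiff g m ω‖₊ : ℝ≥0∞) ∂P with hA
  set B : ℕ → ℝ≥0∞ := fun m => ∫⁻ ω, (‖F.mdiff g m ω‖₊ : ℝ≥0∞) ^ (2:ℝ) ∂P with hB
  have hΔmeas : ∀ m, Measurable fun ω => (‖F.mdiff g m ω‖₊ : ℝ≥0∞) := fun m =>
    (F.stronglyMeasurable_mdiff g m).measurable.enorm
  -- per-m interpolation
  have perm : ∀ m, ∫⁻ ω, (‖F.mdiff g m ω‖₊ : ℝ≥0∞) ^ p ∂P ≤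
      A m ^ (2 - p) * B m ^ (p - 1) := by
    intro m
    have e : ∀ ω, (‖F.mdiff g m ω‖₊ : ℝ≥0∞) ^ p =
        ((‖F.mdiff g m ω‖₊ : ℝ≥0∞)) ^ (2 - p) *
          (((‖F.mdiff g m ω‖₊ : ℝ≥0∞)) ^ (2:ℝ)) ^ (p - 1) := fun ω =>
      rpow_interp_split _ hp1.le hp2
    rw [lintegral_congr e]
    exact lintegral_rpow_interp P (by linarith) (by linarith) (by ring)
      (hΔmeas m).aemeasurable ((hΔmeas m).pow measurable_const).aemeasurable
  -- sum and Hölder over counting measure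
  have hsum : ∑' m, ∫⁻ ω, (‖F.mdiff g m ω‖₊ : ℝ≥0∞) ^ p ∂P ≤
      (∑' m, A m) ^ (2 - p) * (∑' m, B m) ^ (p - 1) := by
    refine (ENNReal.tsum_le_tsum perm).trans ?_
    have := lintegral_rpow_interp (Measure.count : Measure ℕ)
      (by linarith : (0:ℝ) ≤ 2 - p) (by linarith : (0:ℝ) < p - 1) (by ring)
      (u := A) (v := B) (Measurable.of_discrete.aemeasurable)
      (Measurable.of_discrete.aemeasurable)
    rwa [lintegral_count, lintegral_count, lintegral_count] at this
  -- bound ∑ A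
  have hAsum : ∑' m, A m ≤ K * P U := by
    have : ∀ m, A m = eLpNorm (F.mdiff g m) 1 P := fun m =>
      (eLpNorm_one_eq_lintegral_enorm (f := F.mdiff g m) (μ := P)).symm
    rw [tsum_congr this]
    exact hK9
  -- bound ∑ B
  have hBsum : ∑' m, B m ≤ P U := by
    have hzero : ∀ m, S ≤ m → B m = 0 := by
      intro m hm
      rw [hB]
      simp [F.mdiff_eq_zero hmeas hgint hm]
    have htsum : ∑' m, B m = ∑ m ∈ Finset.range S, B m :=
      tsum_eq_sum (fun m hm => hzero m (by simpa using hm))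
    have hBm : ∀ m, B m = ENNReal.ofReal (∫ ω, (F.mdiff g m ω) ^ 2 ∂P) := by
      intro m
      have hint : Integrable (fun ω => (F.mdiff g m ω) ^ 2) P := by
        have h2 : ∀ᵐ ω ∂P, |F.mdiff g m ω| ≤ 2 := by
          simpa using F.abs_mdiff_le hgint hb m
        have hib : Integrable (fun ω => F.mdiff g m ω * F.mdiff g m ω) P :=
          (F.integrable_mdiff g m).bdd_mul (c := 2)
            ((F.stronglyMeasurable_mdiff g m).aestronglyMeasurable)
            (h2.mono fun ω hω => by simpa using hω)
        exact hib.congr (Filter.Eventually.of_forall fun ω => by ring)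
      rw [ofReal_integral_eq_lintegral_ofReal hint
        (Filter.Eventually.of_forall fun ω => sq_nonneg _)]
      exact (lintegral_congr fun ω => (ennnorm_rpow_two _)).symm ▸ rfl
    rw [htsum]
    have : ∑ m ∈ Finset.range S, B m =
        ENNReal.ofReal (∑ m ∈ Finset.range S, ∫ ω, (F.mdiff g m ω) ^ 2 ∂P) := by
      rw [ENNReal.ofReal_sum_of_nonneg (fun m _ => integral_nonneg fun ω => sq_nonneg _)]
      exact Finset.sum_congr rfl fun m _ => hBm m
    rw [this]
    calc ENNReal.ofReal (∑ m ∈ Finset.range S, ∫ ω, (F.mdiff g m ω) ^ 2 ∂P)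
        ≤ ENNReal.ofReal ((P U).toReal) := by
          apply ENNReal.ofReal_le_ofReal
          exact (F.sum_integral_mdiff_sq_le hmeas hb).trans
            (F.integral_sq_le (hmeas.mono (F.filt_le S)).aestronglyMeasurable hb hU hsupp)
      _ ≤ P U := ENNReal.ofReal_toReal_le
  calc ∑' m, ∫⁻ ω, (‖F.mdiff g m ω‖₊ : ℝ≥0∞) ^ p ∂P
      ≤ (∑' m, A m) ^ (2 - p) * (∑' m, B m) ^ (p - 1) := hsum
    _ ≤ (K * P U) ^ (2 - p) * (P U) ^ (p - 1) :=
        mul_le_mul' (ENNReal.rpow_le_rpow hAsum (by linarith))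
          (ENNReal.rpow_le_rpow hBsum (by linarith))
    _ = K ^ (2 - p) * P U := by
        rw [ENNReal.mul_rpow_of_nonneg _ _ (by linarith : (0:ℝ) ≤ 2 - p), mul_assoc,
          ← ENNReal.rpow_add_of_nonneg (2 - p) (p - 1) (by linarith) (by linarith),
          show (2 - p) + (p - 1) = 1 by ring, ENNReal.rpow_one]

end KeyScalar
section Dyadic

theorem left_mem_dyadic (n k : ℕ) : ((k:ℝ)/2^n) ∈ dyadic n k := by
  have hn : (0:ℝ) < 2^n := by positivity
  refine ⟨le_refl _, ?_⟩
  rw [div_lt_div_iff₀ hn hn]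
  nlinarith

theorem dyadic_subset {n m k i : ℕ} (h : m ≤ n) (hlow : i * 2^(n-m) ≤ k)
    (hhigh : k + 1 ≤ (i+1) * 2^(n-m)) : dyadic n k ⊆ dyadic m i := by
  have h2 : (2:ℝ)^n = 2^(n-m) * 2^m := by rw [← pow_add]; congr 1; omega
  have hm : (0:ℝ) < 2^m := by positivity
  have hn : (0:ℝ) < 2^n := by positivity
  intro t ht
  obtain ⟨h1, h2'⟩ := ht
  constructor
  · refine le_trans ?_ h1
    rw [div_le_div_iff₀ hm hn]
    have hcast : ((i * 2^(n-m) : ℕ) : ℝ) ≤ (k : ℝ) := by exact_mod_cast hlow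
    push_cast at hcast
    nlinarith
  · refine lt_of_lt_of_le h2' ?_
    rw [div_le_div_iff₀ hn hm]
    have hcast : (((k+1 : ℕ)) : ℝ) ≤ (((i+1) * 2^(n-m) : ℕ) : ℝ) := by exact_mod_cast hhigh
    push_cast at hcast
    nlinarith

theorem dyadic_self_subset {n m k : ℕ} (h : m ≤ n) :
    dyadic n k ⊆ dyadic m (k / 2^(n-m)) := by
  refine dyadic_subset h (Nat.div_mul_le_self k _) ?_
  have h0 : 0 < 2^(n-m) := Nat.pow_pos (by norm_num)
  have h1 := Nat.div_add_mod k (2^(n-m))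
  have h2 := Nat.mod_lt k h0
  set d := 2^(n-m)
  set q := k / d
  set r := k % d
  calc k + 1 = d * q + r + 1 := by rw [h1]
  _ ≤ d * q + d := by omega
  _ = (q + 1) * d := by ring

theorem dyadic_disjoint {n k l : ℕ} (h : k ≠ l) : dyadic n k ∩ dyadic n l = ∅ := by
  have hn : (0:ℝ) < 2^n := by positivity
  have key : ∀ a b : ℕ, a < b → dyadic n a ∩ dyadic n b = ∅ := by
    intro a b hab
    ext t
    simp only [Set.mem_inter_iff, Set.mem_empty_iff_false, iff_false, not_and]
    rintro ⟨_, h2⟩ ⟨h3, _⟩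
    have hc : ((a:ℝ)+1) ≤ (b:ℝ) := by exact_mod_cast hab
    have : ((a:ℝ)+1)/2^n ≤ (b:ℝ)/2^n := by gcongr
    linarith
  rcases h.lt_or_gt with hkl | hkl
  · exact key _ _ hkl
  · rw [Set.inter_comm]; exact key _ _ hkl

theorem dyadic_child_left (j k : ℕ) : dyadic (j+1) (2*k) ⊆ dyadic j k := by
  have h := dyadic_self_subset (n := j+1) (m := j) (k := 2*k) (Nat.le_succ j)
  have e : (2*k) / 2^(j+1-j) = k := by
    have e1 : j + 1 - j = 1 := by omega
    rw [e1]
    omega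
  rwa [e] at h

theorem dyadic_child_right (j k : ℕ) : dyadic (j+1) (2*k+1) ⊆ dyadic j k := by
  have := dyadic_self_subset (n := j+1) (m := j) (k := 2*k+1) (Nat.le_succ j)
  have e : (2*k+1) / 2^(j+1-j) = k := by
    have : j + 1 - j = 1 := by omega
    rw [this]
    omega
  rwa [e] at this

/-- Trichotomy for the position of a level `N` cell relative to a Haar index `(j,k')`. -/
theorem dyadic_trichotomy {N j k k' : ℕ} (hj : j + 1 ≤ N) :
    dyadic N k ⊆ dyadic (j+1) (2*k') ∨ dyadic N k ⊆ dyadic (j+1) (2*k'+1) ∨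
      (dyadic N k ∩ dyadic j k' = ∅ ∧ dyadic N k ∩ dyadic (j+1) (2*k') = ∅ ∧
        dyadic N k ∩ dyadic (j+1) (2*k'+1) = ∅) := by
  set i := k / 2^(N-(j+1)) with hi
  have hsub : dyadic N k ⊆ dyadic (j+1) i := dyadic_self_subset hj
  rcases eq_or_ne i (2*k') with he | hne1
  · exact Or.inl (he ▸ hsub)
  rcases eq_or_ne i (2*k'+1) with he | hne2
  · exact Or.inr (Or.inl (he ▸ hsub))
  refine Or.inr (Or.inr ⟨?_, ?_, ?_⟩)
  · -- i/2 ≠ k'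
    have hne : i / 2 ≠ k' := by omega
    have hsub2 : dyadic (j+1) i ⊆ dyadic j (i/2) := by
      have := dyadic_self_subset (n := j+1) (m := j) (k := i) (Nat.le_succ j)
      have e : j + 1 - j = 1 := by omega
      rwa [e, pow_one] at this
    have := dyadic_disjoint (n := j) hne
    apply Set.eq_empty_of_subset_empty
    calc dyadic N k ∩ dyadic j k' ⊆ dyadic j (i/2) ∩ dyadic j k' :=
          Set.inter_subset_inter_left _ (hsub.trans hsub2)
    _ = ∅ := this
  · apply Set.eq_empty_of_subset_empty
    calc dyadic N k ∩ dyadic (j+1) (2*k') ⊆ dyadic (j+1) i ∩ dyadic (j+1) (2*k') :=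
          Set.inter_subset_inter_left _ hsub
    _ = ∅ := dyadic_disjoint hne1
  · apply Set.eq_empty_of_subset_empty
    calc dyadic N k ∩ dyadic (j+1) (2*k'+1) ⊆ dyadic (j+1) i ∩ dyadic (j+1) (2*k'+1) :=
          Set.inter_subset_inter_left _ hsub
    _ = ∅ := dyadic_disjoint hne2

/-- The haar function is constant on each level-`N` cell; its value matches the trichotomy. -/
theorem haarFn_eq_on_cell {N j k k' : ℕ} (hj : j + 1 ≤ N) {t : ℝ} (ht : t ∈ dyadic N k) :
    haarFn j k' t = haarFn j k' ((k:ℝ)/2^N) := by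
  have hmem := left_mem_dyadic N k
  rcases dyadic_trichotomy (k := k) (k' := k') hj with h | h | ⟨_, h1, h2⟩
  · have e : ∀ u ∈ dyadic N k, haarFn j k' u = 1 := by
      intro u hu
      have hu1 : u ∈ dyadic (j+1) (2*k') := h hu
      have hu2 : u ∉ dyadic (j+1) (2*k'+1) := by
        intro hc
        have := dyadic_disjoint (n := j+1) (k := 2*k') (l := 2*k'+1) (by omega)
        exact absurd (Set.mem_inter hu1 hc) (by simp [this])
      simp [haarFn, Set.indicator_of_mem hu1, Set.indicator_of_notMem hu2]
    rw [e t ht, e _ hmem]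
  · have e : ∀ u ∈ dyadic N k, haarFn j k' u = -1 := by
      intro u hu
      have hu1 : u ∈ dyadic (j+1) (2*k'+1) := h hu
      have hu2 : u ∉ dyadic (j+1) (2*k') := by
        intro hc
        have := dyadic_disjoint (n := j+1) (k := 2*k') (l := 2*k'+1) (by omega)
        exact absurd (Set.mem_inter hc hu1) (by simp [this])
      simp [haarFn, Set.indicator_of_mem hu1, Set.indicator_of_notMem hu2]
    rw [e t ht, e _ hmem]
  · have e : ∀ u ∈ dyadic N k, haarFn j k' u = 0 := by
      intro u hu
      have hu1 : u ∉ dyadic (j+1) (2*k') := fun hc =>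
        absurd (Set.mem_inter hu hc) (by simp [h1])
      have hu2 : u ∉ dyadic (j+1) (2*k'+1) := fun hc =>
        absurd (Set.mem_inter hu hc) (by simp [h2])
      simp [haarFn, Set.indicator_of_notMem hu1, Set.indicator_of_notMem hu2]
    rw [e t ht, e _ hmem]

theorem abs_haarFn_le (j k : ℕ) (t : ℝ) : |haarFn j k t| ≤ 1 := by
  simp only [haarFn, Pi.sub_apply]
  by_cases h1 : t ∈ dyadic (j+1) (2*k) <;> by_cases h2 : t ∈ dyadic (j+1) (2*k+1) <;>
    simp [Set.indicator_of_mem, Set.indicator_of_notMem, *]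

/-- `[0,1)` is the union of the level-`N` cells. -/
theorem Ico_eq_union_dyadic (N : ℕ) :
    Set.Ico (0:ℝ) 1 = ⋃ k ∈ Finset.range (2^N), dyadic N k := by
  have hN : (0:ℝ) < 2^N := by positivity
  ext t
  simp only [Set.mem_Ico, Set.mem_iUnion, Finset.mem_range]
  constructor
  · rintro ⟨h0, h1⟩
    set x := t * 2^N with hx
    have hx0 : 0 ≤ x := by positivity
    have hfl0 : 0 ≤ ⌊x⌋ := Int.floor_nonneg.mpr hx0
    set k : ℕ := ⌊x⌋.toNat with hk
    have hkc : (k:ℝ) = (⌊x⌋:ℝ) := by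
      rw [hk]; exact_mod_cast congrArg (Int.cast : ℤ → ℝ) (Int.toNat_of_nonneg hfl0)
    refine ⟨k, ?_, ?_, ?_⟩
    · have hlt : (k:ℝ) < ((2^N : ℕ):ℝ) := by
        rw [hkc]
        have h4 : (⌊x⌋ : ℝ) ≤ x := Int.floor_le _
        push_cast
        nlinarith
      exact_mod_cast hlt
    · rw [div_le_iff₀ hN, hkc]
      exact Int.floor_le x
    · rw [lt_div_iff₀ hN, hkc]
      exact Int.lt_floor_add_one x
  · rintro ⟨k, hk, h1, h2⟩
    constructor
    · exact le_trans (by positivity) h1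
    · have : ((k:ℝ)+1)/2^N ≤ 1 := by
        rw [div_le_one hN]
        have : (k:ℝ) + 1 ≤ (2^N : ℕ) := by exact_mod_cast hk
        push_cast at this ⊢
        linarith
      linarith

end Dyadic
section HaarInt

theorem volume_dyadic (N k : ℕ) : MeasureTheory.volume (dyadic N k) = ENNReal.ofReal (((2:ℝ)^N)⁻¹) := by
  rw [dyadic, Real.volume_Ico]
  congr 1
  have hN : (0:ℝ) < 2^N := by positivity
  field_simp
  ring

theorem haar_lhs_eq {X : Type*} [NormedAddCommGroup X] [NormedSpace ℝ X]
    (N : ℕ) (s : Finset (ℕ × ℕ)) (hs : ∀ q ∈ s, q.1 + 1 ≤ N) (x : ℕ × ℕ → X) (p : ℝ) :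
    ∫ t in Set.Ico (0:ℝ) 1, ‖∑ q ∈ s, haarFn q.1 q.2 t • x q‖ ^ p
      = ∑ k ∈ Finset.range (2^N),
          ((2:ℝ)^N)⁻¹ * ‖∑ q ∈ s, haarFn q.1 q.2 ((k:ℝ)/2^N) • x q‖ ^ p := by
  have hN : (0:ℝ) < 2^N := by positivity
  have hmeas : ∀ k, MeasurableSet (dyadic N k) := fun k => measurableSet_Ico
  have hconst : ∀ k : ℕ, Set.EqOn (fun t => ‖∑ q ∈ s, haarFn q.1 q.2 t • x q‖ ^ p)
      (fun _ => ‖∑ q ∈ s, haarFn q.1 q.2 ((k:ℝ)/2^N) • x q‖ ^ p) (dyadic N k) := by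
    intro k t ht
    simp only
    congr 2
    refine Finset.sum_congr rfl fun q hq => ?_
    rw [haarFn_eq_on_cell (hs q hq) ht]
  have hint : ∀ k ∈ Finset.range (2^N),
      MeasureTheory.IntegrableOn (fun t => ‖∑ q ∈ s, haarFn q.1 q.2 t • x q‖ ^ p)
        (dyadic N k) MeasureTheory.volume := by
    intro k _
    refine MeasureTheory.IntegrableOn.congr_fun ?_ ((hconst k).symm) (hmeas k)
    rw [MeasureTheory.integrableOn_const_iff]
    right
    rw [volume_dyadic]
    exact ENNReal.ofReal_lt_top
  rw [Ico_eq_union_dyadic N,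
    MeasureTheory.integral_biUnion_finset (Finset.range (2^N)) (fun k _ => hmeas k)
      (fun k _ l _ hkl => Set.disjoint_iff_inter_eq_empty.mpr (dyadic_disjoint hkl)) hint]
  refine Finset.sum_congr rfl fun k _ => ?_
  rw [MeasureTheory.setIntegral_congr_fun (hmeas k) (hconst k), MeasureTheory.setIntegral_const,
    measureReal_def, volume_dyadic, ENNReal.toReal_ofReal (by positivity), smul_eq_mul]

end HaarInt
section Helpers

set_option linter.unusedSectionVars false

theorem haarFn_left_of_subset_left {N j k k' : ℕ}
    (h : dyadic N k ⊆ dyadic (j+1) (2*k')) : haarFn j k' ((k:ℝ)/2^N) = 1 := by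
  have hm := h (left_mem_dyadic N k)
  have hm2 : ((k:ℝ)/2^N) ∉ dyadic (j+1) (2*k'+1) := by
    intro hc
    have := dyadic_disjoint (n := j+1) (k := 2*k') (l := 2*k'+1) (by omega)
    exact absurd (Set.mem_inter hm hc) (by simp [this])
  simp [haarFn, Set.indicator_of_mem hm, Set.indicator_of_notMem hm2]

theorem haarFn_left_of_subset_right {N j k k' : ℕ}
    (h : dyadic N k ⊆ dyadic (j+1) (2*k'+1)) : haarFn j k' ((k:ℝ)/2^N) = -1 := by
  have hm := h (left_mem_dyadic N k)
  have hm2 : ((k:ℝ)/2^N) ∉ dyadic (j+1) (2*k') := by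
    intro hc
    have := dyadic_disjoint (n := j+1) (k := 2*k') (l := 2*k'+1) (by omega)
    exact absurd (Set.mem_inter hc hm) (by simp [this])
  simp [haarFn, Set.indicator_of_mem hm, Set.indicator_of_notMem hm2]

theorem haarFn_left_of_disjoint {N j k k' : ℕ}
    (h : dyadic N k ∩ dyadic j k' = ∅) : haarFn j k' ((k:ℝ)/2^N) = 0 := by
  have hm := left_mem_dyadic N k
  have hm1 : ((k:ℝ)/2^N) ∉ dyadic (j+1) (2*k') := by
    intro hc
    exact absurd (Set.mem_inter hm (dyadic_child_left j k' hc)) (by simp [h])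
  have hm2 : ((k:ℝ)/2^N) ∉ dyadic (j+1) (2*k'+1) := by
    intro hc
    exact absurd (Set.mem_inter hm (dyadic_child_right j k' hc)) (by simp [h])
  simp [haarFn, Set.indicator_of_notMem hm1, Set.indicator_of_notMem hm2]

variable {Ω : Type*} [m0 : MeasurableSpace Ω] {P : Measure Ω} [IsProbabilityMeasure P]

theorem FilteredAtomic.coll_finite (F : FilteredAtomic Ω P) {S : ℕ} {𝒞 : Set (Set Ω)}
    (hd : 𝒞.PairwiseDisjoint id) (hm : ∀ A ∈ 𝒞, MeasurableSet[F.filt S] A)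
    (hne : ∀ A ∈ 𝒞, A.Nonempty) : 𝒞.Finite := by
  have hφ : ∀ A ∈ 𝒞, ∃ B ∈ F.part S, B ⊆ A := by
    intro A hA
    obtain ⟨ω, hω⟩ := hne A hA
    obtain ⟨B, hB, hωB⟩ := F.exists_mem_part S ω
    rcases F.subset_or_disjoint (hm A hA) B hB with h | h
    · exact ⟨B, hB, h⟩
    · exact absurd hω (Set.disjoint_left.mp h hωB)
  choose φ hφmem hφsub using hφ
  classical
  set ψ : Set Ω → Set Ω := fun A => if h : A ∈ 𝒞 then φ A h else ∅ with hψ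
  have hinj : Set.InjOn ψ 𝒞 := by
    intro A hA A' hA' he
    have he2 : φ A hA = φ A' hA' := by
      simpa [hψ, dif_pos hA, dif_pos hA'] using he
    by_contra hAA
    have hBne : (φ A hA).Nonempty :=
      MeasureTheory.nonempty_of_measure_ne_zero (F.pos S _ (hφmem A hA)).ne'
    obtain ⟨ω, hω⟩ := hBne
    have hω' : ω ∈ φ A' hA' := he2 ▸ hω
    exact Set.disjoint_left.mp (hd hA hA' hAA) (hφsub A hA hω) (hφsub A' hA' hω')
  have himg : ψ '' 𝒞 ⊆ ↑(F.part S) := by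
    rintro _ ⟨A, hA, rfl⟩
    simp only [hψ, dif_pos hA]
    exact_mod_cast hφmem A hA
  exact Set.Finite.of_finite_image (((F.part S).finite_toSet).subset himg) hinj

theorem FilteredAtomic.coll_measurable (F : FilteredAtomic Ω P) {S : ℕ} {𝒞 : Set (Set Ω)}
    (hd : 𝒞.PairwiseDisjoint id) (hm : ∀ A ∈ 𝒞, MeasurableSet[F.filt S] A)
    (hne : ∀ A ∈ 𝒞, A.Nonempty) : MeasurableSet (⋃₀ 𝒞) :=
  (F.coll_finite hd hm hne).measurableSet_sUnion fun A hA => F.filt_le S _ (hm A hA)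

theorem toReal_bound_upper {U A0 : Set Ω} {c : ℝ} (hc : 0 ≤ c)
    (h : P U ≤ ENNReal.ofReal c * P A0) : (P U).toReal ≤ c * (P A0).toReal := by
  have hfin : ENNReal.ofReal c * P A0 ≠ ⊤ :=
    ENNReal.mul_ne_top ENNReal.ofReal_ne_top (measure_ne_top P A0)
  have := ENNReal.toReal_mono hfin h
  rwa [ENNReal.toReal_mul, ENNReal.toReal_ofReal hc] at this

theorem toReal_bound_lower {U A0 : Set Ω} {c : ℝ}
    (h : ENNReal.ofReal c * P A0 ≤ P U) : c * (P A0).toReal ≤ (P U).toReal := by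
  rcases le_or_gt c 0 with hc | hc
  · have : c * (P A0).toReal ≤ 0 := mul_nonpos_of_nonpos_of_nonneg hc ENNReal.toReal_nonneg
    exact this.trans ENNReal.toReal_nonneg
  · have := ENNReal.toReal_mono (measure_ne_top P U) h
    rwa [ENNReal.toReal_mul, ENNReal.toReal_ofReal hc.le] at this

end Helpers
section Glue

set_option linter.unusedSectionVars false

variable {Ω : Type*} [m0 : MeasurableSpace Ω] {P : Measure Ω} [IsProbabilityMeasure P]

theorem FilteredAtomic.ae_of_forall_atom (F : FilteredAtomic Ω P) {S : ℕ} {p : Ω → Prop}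
    (h : ∀ A ∈ F.part S, ∀ᵐ ω ∂P.restrict A, p ω) : ∀ᵐ ω ∂P, p ω := by
  rw [MeasureTheory.ae_iff]
  have hsub : {ω | ¬ p ω} ⊆ ⋃ A ∈ F.part S, ({ω | ¬p ω} ∩ A) := by
    intro ω hω
    obtain ⟨A, hA, hωA⟩ := F.exists_mem_part S ω
    exact Set.mem_biUnion hA ⟨hω, hωA⟩
  refine le_antisymm ?_ zero_le
  calc P {ω | ¬ p ω} ≤ ∑ A ∈ F.part S, P ({ω | ¬p ω} ∩ A) :=
        (measure_mono hsub).trans (measure_biUnion_finset_le _ _)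
  _ = 0 := by
      refine Finset.sum_eq_zero fun A hA => ?_
      have := h A hA
      rw [MeasureTheory.ae_iff] at this
      rwa [Measure.restrict_apply' (F.meas S A hA)] at this

theorem FilteredAtomic.ae_atMostOne (F : FilteredAtomic Ω P) {S n : ℕ}
    (s : Finset (ℕ × ℕ)) (g : ℕ × ℕ → Ω → ℝ)
    (h8 : ∀ A ∈ F.part S, ∀ q ∈ s, ∀ q' ∈ s,
      ¬ F.mdiff (g q) n =ᵐ[P.restrict A] (0 : Ω → ℝ) →
      ¬ F.mdiff (g q') n =ᵐ[P.restrict A] (0 : Ω → ℝ) → q = q') :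
    ∀ᵐ ω ∂P, ∀ q ∈ s, ∀ q' ∈ s,
      F.mdiff (g q) n ω ≠ 0 → F.mdiff (g q') n ω ≠ 0 → q = q' := by
  refine F.ae_of_forall_atom (S := S) fun A hA => ?_
  have pairwise : ∀ q ∈ s, ∀ q' ∈ s, q ≠ q' →
      (F.mdiff (g q) n =ᵐ[P.restrict A] (0 : Ω → ℝ)) ∨
      (F.mdiff (g q') n =ᵐ[P.restrict A] (0 : Ω → ℝ)) := by
    intro q hq q' hq' hne
    by_contra hcon
    push_neg at hcon
    exact hne (h8 A hA q hq q' hq' hcon.1 hcon.2)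
  have key : ∀ᵐ ω ∂P.restrict A, ∀ qq' : (ℕ × ℕ) × (ℕ × ℕ), qq'.1 ∈ s → qq'.2 ∈ s →
      qq'.1 ≠ qq'.2 → (F.mdiff (g qq'.1) n ω = 0 ∨ F.mdiff (g qq'.2) n ω = 0) := by
    rw [MeasureTheory.ae_all_iff]
    rintro ⟨q, q'⟩
    by_cases hq : q ∈ s
    · by_cases hq' : q' ∈ s
      · rcases eq_or_ne q q' with rfl | hne
        · exact Filter.Eventually.of_forall fun ω _ _ h => absurd rfl h
        · rcases pairwise q hq q' hq' hne with hz | hz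
          · filter_upwards [hz] with ω h _ _ _
            exact Or.inl h
          · filter_upwards [hz] with ω h _ _ _
            exact Or.inr h
      · exact Filter.Eventually.of_forall fun ω _ h => absurd h hq'
    · exact Filter.Eventually.of_forall fun ω h => absurd h hq
  filter_upwards [key] with ω hω q hq q' hq' hnz hnz'
  by_contra hne
  rcases hω (q, q') hq hq' hne with h | h
  · exact hnz h
  · exact hnz' h

/-- Bound on `|∫ g|` for a function `= 1` on `Up`, `= -1` on `Um`, supported on `U`. -/
theorem expectation_bound {g : Ω → ℝ} (hgsm : AEStronglyMeasurable g P)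
    (hgb : ∀ ω, |g ω| ≤ 1)
    {U Up Um : Set Ω} (hU : MeasurableSet U) (hUp : MeasurableSet Up) (hUm : MeasurableSet Um)
    (hsupp : Function.support g ⊆ U) (hUpU : Up ⊆ U) (hUmU : Um ⊆ U)
    (hdisj : Up ∩ Um = ∅)
    (hgp : Up ⊆ {ω | g ω = 1}) (hgm : Um ⊆ {ω | g ω = -1}) :
    |∫ ω, g ω ∂P| ≤ |(P Up).toReal - (P Um).toReal| +
      ((P U).toReal - (P Up).toReal - (P Um).toReal) := by
  have hint : Integrable g P := integrable_of_bound hgsm 1 (by simpa using hgb)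
  set M : Set Ω := U \ (Up ∪ Um) with hM
  have hMmeas : MeasurableSet M := hU.diff (hUp.union hUm)
  have hdisj' : Disjoint Up Um := Set.disjoint_iff_inter_eq_empty.mpr hdisj
  have hUeq : U = (Up ∪ Um) ∪ M := by
    rw [hM, Set.union_diff_cancel (Set.union_subset hUpU hUmU)]
  have h0 : ∫ ω, g ω ∂P = ∫ ω in U, g ω ∂P :=
    (setIntegral_eq_integral_of_forall_compl_eq_zero
      (fun ω hω => Function.notMem_support.mp (fun hc => hω (hsupp hc)))).symm
  have hIOn : ∀ V : Set Ω, IntegrableOn g V P := fun V => hint.integrableOn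
  have hsplit : ∫ ω in U, g ω ∂P =
      (∫ ω in Up, g ω ∂P + ∫ ω in Um, g ω ∂P) + ∫ ω in M, g ω ∂P := by
    rw [hUeq, setIntegral_union (Set.disjoint_sdiff_right) hMmeas (hIOn _) (hIOn _),
      setIntegral_union hdisj' hUm (hIOn _) (hIOn _)]
  have hup : ∫ ω in Up, g ω ∂P = (P Up).toReal := by
    rw [setIntegral_congr_fun hUp (fun ω hω => hgp hω), setIntegral_const]
    simp
    rfl
  have hum : ∫ ω in Um, g ω ∂P = -(P Um).toReal := by
    rw [setIntegral_congr_fun hUm (fun ω hω => hgm hω), setIntegral_const]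
    simp
    rfl
  have hMbound : |∫ ω in M, g ω ∂P| ≤ (P M).toReal := by
    have := norm_setIntegral_le_of_norm_le_const (μ := P) (s := M) (C := 1) (f := g)
      (measure_lt_top P M) (fun ω _ => by simpa using hgb ω)
    exact (by simpa using this : |∫ ω in M, g ω ∂P| ≤ P.real M)
  have hMmeasure : (P M).toReal = (P U).toReal - (P Up).toReal - (P Um).toReal := by
    have h1 : P M = P U - P (Up ∪ Um) := by
      rw [hM]
      exact measure_diff (Set.union_subset hUpU hUmU) (hUp.union hUm).nullMeasurableSet
        (measure_ne_top P _)
    have h2 : P (Up ∪ Um) = P Up + P Um := measure_union hdisj' hUm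
    rw [h1, ENNReal.toReal_sub_of_le (measure_mono (hUeq ▸ Set.subset_union_left)) 
      (measure_ne_top P U), h2, ENNReal.toReal_add (measure_ne_top P _) (measure_ne_top P _)]
    ring
  calc |∫ ω, g ω ∂P| = |((P Up).toReal + -(P Um).toReal) + ∫ ω in M, g ω ∂P| := by
        rw [h0, hsplit, hup, hum]
  _ ≤ |(P Up).toReal - (P Um).toReal| + |∫ ω in M, g ω ∂P| := by
        rw [sub_eq_add_neg]; exact abs_add_le _ _
  _ ≤ |(P Up).toReal - (P Um).toReal| + ((P U).toReal - (P Up).toReal - (P Um).toReal) := by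
        rw [← hMmeasure]; linarith [hMbound]

end Glue
section KeyDelta

set_option linter.unusedSectionVars false
set_option maxHeartbeats 1000000

variable {Ω : Type*} [m0 : MeasurableSpace Ω] {P : Measure Ω} [IsProbabilityMeasure P]
variable {X : Type*} [NormedAddCommGroup X] [NormedSpace ℝ X] [CompleteSpace X]

theorem FilteredAtomic.eColl_pos (F : FilteredAtomic Ω P) {A : Set Ω} (hA : A ∈ F.eColl) :
    0 < P A := by
  obtain ⟨hAatoms, -⟩ := hA
  obtain ⟨n, hn⟩ := Set.mem_iUnion.mp hAatoms
  exact F.pos n A (by exact_mod_cast hn)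

theorem key_delta (F : FilteredAtomic Ω P)
    {p : ℝ} (hp1 : 1 < p) (hp2 : p ≤ 2) {K : ℝ} (hK : SupportsHaar F K)
    {T : ℝ} (hT : 0 < T)
    (hineq : ∀ f : Ω → X, MemLp f (ENNReal.ofReal p) P →
      eLpNorm f (ENNReal.ofReal p) P ≤ ENNReal.ofReal T * F.mtBound f p)
    (s : Finset (ℕ × ℕ)) (hs : ∀ q ∈ s, q.2 < 2 ^ q.1) (x : ℕ × ℕ → X)
    {δ : ℝ} (hδ0 : 0 < δ) (hδ1 : δ < 1) :
    (1 - δ) * (∫ t in Set.Ico (0:ℝ) 1, ‖∑ q ∈ s, haarFn q.1 q.2 t • x q‖ ^ p) ≤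
      T ^ p * ((6 * δ * ∑ q ∈ s, ‖x q‖) ^ p +
        K ^ (2 - p) * ∑ q ∈ s, ‖x q‖ ^ p * ((2:ℝ) ^ q.1)⁻¹) := by
  classical
  have hp0 : (0:ℝ) < p := by linarith
  set N : ℕ := (s.sup fun q => q.1) + 1 with hN
  have hsN : ∀ q ∈ s, q.1 + 1 ≤ N := fun q hq => Nat.succ_le_succ (Finset.le_sup hq)
  obtain ⟨hKpos, hHaar⟩ := hK
  obtain ⟨C, g, A0, S, hA0, h1, h2, h3, h4, h5, h6, h7, h8, h9, h10⟩ := hHaar N δ hδ0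
  set ε : ℝ := δ * ((2:ℝ) ^ (N + 1))⁻¹ with hε
  have hε0 : 0 < ε := by positivity
  have h2pos : (0:ℝ) < 2 ^ (N + 1) := by positivity
  have h2N : (1:ℝ) ≤ 2 ^ (N + 1) := by exact_mod_cast Nat.one_le_two_pow (n := N + 1)
  have hinv : ((2:ℝ) ^ (N + 1))⁻¹ ≤ 1 := by
    rw [← one_div, div_le_one h2pos]; exact h2N
  have hεδ : ε ≤ δ := by
    rw [hε]
    exact mul_le_of_le_one_right hδ0.le hinv
  -- basic facts about the collections
  have hCmem : ∀ j k, j ≤ N → k < 2^j → ∀ A ∈ C (j, k), A ∈ F.eColl ∧ A ⊆ A0 :=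
    fun j k hj hk A hA => h2 j k hj hk hA
  -- nonemptiness / finiteness / measurability of the collections
  have hCne : ∀ j k, j ≤ N → k < 2^j → ∀ A ∈ C (j, k), A.Nonempty := fun j k hj hk A hA =>
    MeasureTheory.nonempty_of_measure_ne_zero (F.eColl_pos (hCmem j k hj hk A hA).1).ne'
  have hCfin : ∀ j k, j ≤ N → k < 2^j → (C (j, k)).Finite := fun j k hj hk =>
    F.coll_finite (h3 j k hj hk) (h6 j k hj hk) (hCne j k hj hk)
  have hUmeas : ∀ j k, j ≤ N → k < 2^j → MeasurableSet (⋃₀ C (j, k)) := fun j k hj hk =>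
    F.coll_measurable (h3 j k hj hk) (h6 j k hj hk) (hCne j k hj hk)
  have hA0pos : 0 < P A0 := F.eColl_pos hA0
  -- facts about each Haar function gₑ for q ∈ s
  have hq1 : ∀ q ∈ s, q.1 + 1 ≤ N := hsN
  have hq2 : ∀ q ∈ s, q.2 < 2 ^ q.1 := hs
  have hgb : ∀ q ∈ s, ∀ ω, |g q ω| ≤ 1 := by
    intro q hq ω
    have := (h5 q.1 q.2 (hq1 q hq) (hq2 q hq)).1 ω
    rw [Set.mem_Icc] at this
    rw [abs_le]
    simpa using this
  have hgsupp : ∀ q ∈ s, Function.support (g q) ⊆ ⋃₀ C (q.1, q.2) := by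
    intro q hq
    have := (h5 q.1 q.2 (hq1 q hq) (hq2 q hq)).2.1
    simpa using this
  have hgmeas : ∀ q ∈ s, StronglyMeasurable[F.filt S] (g q) := by
    intro q hq
    have := h7 q.1 q.2 (hq1 q hq) (hq2 q hq)
    exact (by simpa using this : Measurable[F.filt S] (g q)).stronglyMeasurable
  have hgint : ∀ q ∈ s, Integrable (g q) P := fun q hq =>
    integrable_of_bound ((hgmeas q hq).mono (F.filt_le S)).aestronglyMeasurable 1
      (by simpa using hgb q hq)
  -- the test function f
  set f : Ω → X := fun ω => ∑ q ∈ s, g q ω • x q with hf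
  have hfsm : StronglyMeasurable[F.filt S] f :=
    Finset.stronglyMeasurable_fun_sum s fun q hq => (hgmeas q hq).smul_const (x q)
  have hfint : Integrable f P :=
    MeasureTheory.integrable_finset_sum s fun q hq => (hgint q hq).smul_const (x q)
  have hfbound : ∀ ω, ‖f ω‖ ≤ ∑ q ∈ s, ‖x q‖ := by
    intro ω
    refine (norm_sum_le _ _).trans (Finset.sum_le_sum fun q hq => ?_)
    rw [norm_smul]
    have := hgb q hq ω
    have h1 : ‖g q ω‖ ≤ 1 := by simpa using this
    nlinarith [norm_nonneg (x q)]
  have hfmem : MemLp f (ENNReal.ofReal p) P :=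
    (memLp_top_of_bound (hfsm.mono (F.filt_le S)).aestronglyMeasurable _
      (Filter.Eventually.of_forall hfbound)).mono_exponent le_top
  -- value of f on the level-N pieces
  set v : ℕ → X := fun k => ∑ q ∈ s, haarFn q.1 q.2 ((k:ℝ)/2^N) • x q with hv
  have hfv : ∀ k, k < 2^N → ∀ ω ∈ ⋃₀ C (N, k), f ω = v k := by
    intro k hk ω hω
    refine Finset.sum_congr rfl fun q hq => ?_
    congr 1
    have hq1' := hq1 q hq
    have hq2' := hq2 q hq
    have h2q2 : 2 * q.2 < 2 ^ (q.1 + 1) := by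
      have := hq2'
      calc 2 * q.2 < 2 * 2 ^ q.1 := by omega
      _ = 2 ^ (q.1 + 1) := by ring
    have h2q2' : 2 * q.2 + 1 < 2 ^ (q.1 + 1) := by
      have := hq2'
      calc 2 * q.2 + 1 < 2 * 2 ^ q.1 := by omega
      _ = 2 ^ (q.1 + 1) := by ring
    rcases dyadic_trichotomy (N := N) (j := q.1) (k := k) (k' := q.2) hq1' with hc | hc | hc
    · rw [haarFn_left_of_subset_left hc]
      have hsub : ⋃₀ C (N, k) ⊆ ⋃₀ C (q.1 + 1, 2 * q.2) :=
        ((h4 N k (q.1+1) (2*q.2) le_rfl hk hq1' h2q2).1).mpr hc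
      have hval := (h5 q.1 q.2 hq1' hq2').2.2.1
      have := hval (hsub hω)
      simpa using this
    · rw [haarFn_left_of_subset_right hc]
      have hsub : ⋃₀ C (N, k) ⊆ ⋃₀ C (q.1 + 1, 2 * q.2 + 1) :=
        ((h4 N k (q.1+1) (2*q.2+1) le_rfl hk hq1' h2q2').1).mpr hc
      have hval := (h5 q.1 q.2 hq1' hq2').2.2.2
      have := hval (hsub hω)
      simpa using this
    · rw [haarFn_left_of_disjoint hc.1]
      by_contra hg0
      have hωsupp : ω ∈ Function.support (g q) := fun h => hg0 (by rw [h])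
      have hωU : ω ∈ ⋃₀ C (q.1, q.2) := by
        have := hgsupp q hq hωsupp
        simpa using this
      have hne : (⋃₀ C (N, k) ∩ ⋃₀ C (q.1, q.2)).Nonempty := ⟨ω, hω, hωU⟩
      have := ((h4 N k q.1 q.2 le_rfl hk (by omega) hq2').2).mp hne
      rw [hc.1] at this
      exact Set.not_nonempty_empty this
  -- the exponent
  set p' : ℝ≥0∞ := ENNReal.ofReal p with hp'
  have hp'0 : p' ≠ 0 := by
    rw [hp']
    simp [ENNReal.ofReal_eq_zero]
    linarith
  have hp'top : p' ≠ ⊤ := ENNReal.ofReal_ne_top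
  have hp'toReal : p'.toReal = p := ENNReal.toReal_ofReal hp0.le
  have heLp_pow : ∀ h : Ω → X, eLpNorm h p' P ^ p = ∫⁻ ω, (‖h ω‖₊ : ℝ≥0∞) ^ p ∂P := by
    intro h
    rw [eLpNorm_eq_lintegral_rpow_enorm_toReal hp'0 hp'top, hp'toReal, ← ENNReal.rpow_mul,
      one_div, inv_mul_cancel₀ (ne_of_gt hp0), ENNReal.rpow_one]
    rfl
  -- disjointness of the level-N pieces
  have hUdisjN : (↑(Finset.range (2^N)) : Set ℕ).PairwiseDisjoint
      (fun k => ⋃₀ C (N, k)) := by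
    intro k hk k' hk' hkk'
    simp only [Finset.coe_range, Set.mem_Iio] at hk hk'
    rw [Function.onFun, Set.disjoint_iff_inter_eq_empty]
    by_contra hne
    have hne' : (⋃₀ C (N, k) ∩ ⋃₀ C (N, k')).Nonempty :=
      Set.nonempty_iff_ne_empty.mpr hne
    have := ((h4 N k N k' le_rfl hk le_rfl hk').2).mp hne'
    rw [dyadic_disjoint hkk'] at this
    exact Set.not_nonempty_empty this
  -- the lower bound
  set Lint : ℝ := ∫ t in Set.Ico (0:ℝ) 1, ‖∑ q ∈ s, haarFn q.1 q.2 t • x q‖ ^ p with hLint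
  have hLeq : Lint = ∑ k ∈ Finset.range (2^N), ((2:ℝ)^N)⁻¹ * ‖v k‖ ^ p :=
    haar_lhs_eq N s hq1 x p
  have hlow : ENNReal.ofReal (1 - δ) * P A0 * ENNReal.ofReal Lint ≤ eLpNorm f p' P ^ p := by
    rw [heLp_pow f]
    have hstep1 : ∑ k ∈ Finset.range (2^N), ∫⁻ ω in ⋃₀ C (N, k), (‖f ω‖₊ : ℝ≥0∞) ^ p ∂P ≤
        ∫⁻ ω, (‖f ω‖₊ : ℝ≥0∞) ^ p ∂P := by
      rw [← lintegral_biUnion_finset hUdisjN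
        (fun k hk => hUmeas N k le_rfl (by simpa using hk)) _]
      exact lintegral_mono' (Measure.restrict_le_self) (le_refl _)
    refine le_trans ?_ hstep1
    have hstep2 : ∀ k ∈ Finset.range (2^N),
        ∫⁻ ω in ⋃₀ C (N, k), (‖f ω‖₊ : ℝ≥0∞) ^ p ∂P =
          (‖v k‖₊ : ℝ≥0∞) ^ p * P (⋃₀ C (N, k)) := by
      intro k hk
      rw [Finset.mem_range] at hk
      rw [setLIntegral_congr_fun (hUmeas N k le_rfl hk)
        (fun ω hω => by rw [hfv k hk ω hω]),
        setLIntegral_const]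
    rw [Finset.sum_congr rfl hstep2]
    have hlowmeasure : ∀ k, k < 2^N →
        ENNReal.ofReal (1 - δ) * ENNReal.ofReal (((2:ℝ)^N)⁻¹) * P A0 ≤ P (⋃₀ C (N, k)) := by
      intro k hk
      have := (h10 N k le_rfl hk).1
      have heq : ((2:ℝ)^N)⁻¹ - 2 * (δ * ((2:ℝ)^(N+1))⁻¹) = (1 - δ) * ((2:ℝ)^N)⁻¹ := by
        have hpow : (2:ℝ)^(N+1) = 2 * 2^N := by ring
        rw [hpow]
        have h2N0 : (2:ℝ)^N ≠ 0 := by positivity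
        field_simp
      rw [heq] at this
      rwa [← ENNReal.ofReal_mul (by linarith)]
    calc ENNReal.ofReal (1 - δ) * P A0 * ENNReal.ofReal Lint
        = ∑ k ∈ Finset.range (2^N), (‖v k‖₊ : ℝ≥0∞) ^ p *
            (ENNReal.ofReal (1 - δ) * ENNReal.ofReal (((2:ℝ)^N)⁻¹) * P A0) := by
          rw [hLeq, ENNReal.ofReal_sum_of_nonneg (fun k _ => by positivity),
            Finset.mul_sum]
          refine Finset.sum_congr rfl fun k _ => ?_
          rw [ENNReal.ofReal_mul (by positivity),
            ← enorm_eq_nnnorm, ← ofReal_norm,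
            ← ENNReal.ofReal_rpow_of_nonneg (norm_nonneg _) hp0.le]
          ring
      _ ≤ ∑ k ∈ Finset.range (2^N), (‖v k‖₊ : ℝ≥0∞) ^ p * P (⋃₀ C (N, k)) := by
          refine Finset.sum_le_sum fun k hk => ?_
          exact mul_le_mul_right (hlowmeasure k (by simpa using hk)) _
  -- the expectation bound
  set a : ℝ := (P A0).toReal with ha
  have ha0 : 0 ≤ a := ENNReal.toReal_nonneg
  have ha1 : a ≤ 1 := by
    rw [ha]
    have := prob_le_one (μ := P) (s := A0)
    calc (P A0).toReal ≤ (1 : ℝ≥0∞).toReal := ENNReal.toReal_mono (by simp) this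
    _ = 1 := by simp
  set Sx : ℝ := ∑ q ∈ s, ‖x q‖ with hSx
  have hSx0 : 0 ≤ Sx := Finset.sum_nonneg fun q _ => norm_nonneg _
  have hgEbound : ∀ q ∈ s, |∫ ω, g q ω ∂P| ≤ 6 * δ * a := by
    intro q hq
    have hq1' := hq1 q hq
    have hq2' := hq2 q hq
    have h2q2 : 2 * q.2 < 2 ^ (q.1 + 1) := by
      calc 2 * q.2 < 2 * 2 ^ q.1 := by omega
      _ = 2 ^ (q.1 + 1) := by ring
    have h2q2' : 2 * q.2 + 1 < 2 ^ (q.1 + 1) := by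
      calc 2 * q.2 + 1 < 2 * 2 ^ q.1 := by omega
      _ = 2 ^ (q.1 + 1) := by ring
    have hjN : q.1 ≤ N := by omega
    set U : Set Ω := ⋃₀ C (q.1, q.2) with hU
    set Up : Set Ω := ⋃₀ C (q.1 + 1, 2 * q.2) with hUp
    set Um : Set Ω := ⋃₀ C (q.1 + 1, 2 * q.2 + 1) with hUm
    have hUmeas' : MeasurableSet U := hUmeas q.1 q.2 hjN hq2'
    have hUpmeas : MeasurableSet Up := hUmeas (q.1+1) (2*q.2) hq1' h2q2
    have hUmmeas : MeasurableSet Um := hUmeas (q.1+1) (2*q.2+1) hq1' h2q2'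
    have hUpU : Up ⊆ U :=
      ((h4 (q.1+1) (2*q.2) q.1 q.2 hq1' h2q2 hjN hq2').1).mpr (dyadic_child_left _ _)
    have hUmU : Um ⊆ U :=
      ((h4 (q.1+1) (2*q.2+1) q.1 q.2 hq1' h2q2' hjN hq2').1).mpr (dyadic_child_right _ _)
    have hdisjPM : Up ∩ Um = ∅ := by
      by_contra hne
      have hne' : (Up ∩ Um).Nonempty := Set.nonempty_iff_ne_empty.mpr hne
      have := ((h4 (q.1+1) (2*q.2) (q.1+1) (2*q.2+1) hq1' h2q2 hq1' h2q2').2).mp hne'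
      rw [dyadic_disjoint (by omega : 2*q.2 ≠ 2*q.2+1)] at this
      exact Set.not_nonempty_empty this
    have hgp : Up ⊆ {ω | g q ω = 1} := by
      have := (h5 q.1 q.2 hq1' hq2').2.2.1
      intro ω hω
      have h' := this hω
      simpa using h'
    have hgm' : Um ⊆ {ω | g q ω = -1} := by
      have := (h5 q.1 q.2 hq1' hq2').2.2.2
      intro ω hω
      have h' := this hω
      simpa using h'
    have hsupp' : Function.support (g q) ⊆ U := hgsupp q hq
    have hEB := expectation_bound (P := P)
      ((hgmeas q hq).mono (F.filt_le S)).aestronglyMeasurable (hgb q hq)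
      hUmeas' hUpmeas hUmmeas hsupp' hUpU hUmU hdisjPM hgp hgm'
    -- A10 numeric bounds
    have hu2 : (P U).toReal ≤ ((2:ℝ)^q.1)⁻¹ * a :=
      toReal_bound_upper (by positivity) (h10 q.1 q.2 hjN hq2').2
    have hup2 : (P Up).toReal ≤ ((2:ℝ)^(q.1+1))⁻¹ * a :=
      toReal_bound_upper (by positivity) (h10 (q.1+1) (2*q.2) hq1' h2q2).2
    have hum2 : (P Um).toReal ≤ ((2:ℝ)^(q.1+1))⁻¹ * a :=
      toReal_bound_upper (by positivity) (h10 (q.1+1) (2*q.2+1) hq1' h2q2').2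
    have hup1 : (((2:ℝ)^(q.1+1))⁻¹ - 2 * (δ * ((2:ℝ)^(N+1))⁻¹)) * a ≤ (P Up).toReal :=
      toReal_bound_lower (h10 (q.1+1) (2*q.2) hq1' h2q2).1
    have hum1 : (((2:ℝ)^(q.1+1))⁻¹ - 2 * (δ * ((2:ℝ)^(N+1))⁻¹)) * a ≤ (P Um).toReal :=
      toReal_bound_lower (h10 (q.1+1) (2*q.2+1) hq1' h2q2').1
    have hexp1 : (((2:ℝ)^(q.1+1))⁻¹ - 2 * (δ * ((2:ℝ)^(N+1))⁻¹)) * a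
        = ((2:ℝ)^(q.1+1))⁻¹ * a - 2 * (ε * a) := by rw [hε]; ring
    have hexp2 : ((2:ℝ)^q.1)⁻¹ * a = 2 * (((2:ℝ)^(q.1+1))⁻¹ * a) := by
      have h20 : (2:ℝ)^q.1 ≠ 0 := by positivity
      have : ((2:ℝ)^(q.1+1)) = 2 * (2:ℝ)^q.1 := by ring
      rw [this]
      field_simp
    rw [hexp1] at hup1 hum1
    have hεa : ε * a ≤ δ * a := mul_le_mul_of_nonneg_right hεδ ha0
    have habs : |(P Up).toReal - (P Um).toReal| ≤ 2 * (ε * a) := by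
      rw [abs_le]
      constructor <;> linarith
    have hM : (P U).toReal - (P Up).toReal - (P Um).toReal ≤ 4 * (ε * a) := by
      linarith
    calc |∫ ω, g q ω ∂P| ≤ |(P Up).toReal - (P Um).toReal| +
          ((P U).toReal - (P Up).toReal - (P Um).toReal) := hEB
    _ ≤ 2 * (ε * a) + 4 * (ε * a) := by linarith
    _ = 6 * (ε * a) := by ring
    _ ≤ 6 * δ * a := by linarith
  have hEf : ‖∫ ω, f ω ∂P‖ ≤ 6 * δ * a * Sx := by
    have hef : ∫ ω, f ω ∂P = ∑ q ∈ s, (∫ ω, g q ω ∂P) • x q := by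
      rw [hf, integral_finset_sum s fun q hq => (hgint q hq).smul_const (x q)]
      exact Finset.sum_congr rfl fun q hq => integral_smul_const (g q) (x q)
    rw [hef, hSx, Finset.mul_sum]
    refine (norm_sum_le _ _).trans (Finset.sum_le_sum fun q hq => ?_)
    rw [norm_smul]
    have h1 := hgEbound q hq
    have h2 : ‖∫ ω, g q ω ∂P‖ = |∫ ω, g q ω ∂P| := rfl
    rw [h2]
    have := norm_nonneg (x q)
    have habs0 := abs_nonneg (∫ ω, g q ω ∂P)
    nlinarith
  have hE1 : (‖∫ ω, f ω ∂P‖₊ : ℝ≥0∞) ^ p ≤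
      ENNReal.ofReal ((6 * δ * Sx) ^ p) * P A0 := by
    have hap : a ^ p ≤ a := by
      rcases eq_or_lt_of_le ha0 with he | ha'
      · rw [← he, Real.zero_rpow (ne_of_gt hp0)]
      · calc a ^ p ≤ a ^ (1:ℝ) := Real.rpow_le_rpow_of_exponent_ge ha' ha1 (by linarith)
        _ = a := Real.rpow_one a
    calc (‖∫ ω, f ω ∂P‖₊ : ℝ≥0∞) ^ p
        = ENNReal.ofReal (‖∫ ω, f ω ∂P‖) ^ p := by rw [ofReal_norm, enorm_eq_nnnorm]
      _ ≤ ENNReal.ofReal (6 * δ * a * Sx) ^ p :=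
          ENNReal.rpow_le_rpow (ENNReal.ofReal_le_ofReal hEf) hp0.le
      _ = ENNReal.ofReal ((6 * δ * a * Sx) ^ p) := by
          rw [ENNReal.ofReal_rpow_of_nonneg (by positivity) hp0.le]
      _ = ENNReal.ofReal ((6 * δ * Sx) ^ p * a ^ p) := by
          rw [← Real.mul_rpow (by positivity) ha0]
          ring_nf
      _ ≤ ENNReal.ofReal ((6 * δ * Sx) ^ p * a) := by
          apply ENNReal.ofReal_le_ofReal
          have : (0:ℝ) ≤ (6 * δ * Sx) ^ p := by positivity
          nlinarith
      _ = ENNReal.ofReal ((6 * δ * Sx) ^ p) * P A0 := by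
          rw [ENNReal.ofReal_mul (by positivity), ha,
            ENNReal.ofReal_toReal (measure_ne_top P A0)]
  -- the martingale bound
  have hae : ∀ n, F.mdiff f n =ᵐ[P] fun ω => ∑ q ∈ s, F.mdiff (g q) n ω • x q := by
    intro n
    have h0 : F.mdiff f n =ᵐ[P] fun ω => ∑ q ∈ s, F.mdiff (fun ω => g q ω • x q) n ω :=
      F.mdiff_finset_sum s (fun q ω => g q ω • x q)
        (fun q hq => (hgint q hq).smul_const (x q)) n
    refine h0.trans ?_
    have hall : ∀ᵐ ω ∂P, ∀ q ∈ s,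
        F.mdiff (fun ω => g q ω • x q) n ω = F.mdiff (g q) n ω • x q := by
      rw [Filter.eventually_all_finset]
      intro q hq
      exact F.mdiff_smul_const (hgint q hq) (x q) n
    filter_upwards [hall] with ω hω
    exact Finset.sum_congr rfl fun q hq => hω q hq
  have haeone : ∀ n, n < S → ∀ᵐ ω ∂P, ∀ q ∈ s, ∀ q' ∈ s,
      F.mdiff (g q) n ω ≠ 0 → F.mdiff (g q') n ω ≠ 0 → q = q' := by
    intro n hn
    refine F.ae_atMostOne (S := S) s g ?_
    intro A hA q hq q' hq' hnz hnz'
    have := h8 A hA (n+1) (by omega) (by omega) q.1 q.2 q'.1 q'.2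
      (hq1 q hq) (hq2 q hq) (hq1 q' hq') (hq2 q' hq')
      (by simpa using hnz) (by simpa using hnz')
    have h1 : (q.1, q.2) = (q'.1, q'.2) := this
    calc q = (q.1, q.2) := rfl
    _ = (q'.1, q'.2) := h1
    _ = q' := rfl
  have hmes : ∀ (q : ℕ × ℕ) (n : ℕ),
      Measurable fun ω => (‖F.mdiff (g q) n ω‖₊ : ℝ≥0∞) ^ p := fun q n =>
    ((F.stronglyMeasurable_mdiff (g q) n).measurable.enorm).pow measurable_const
  set SInf : ℝ≥0∞ := ∑ q ∈ s, (‖x q‖₊ : ℝ≥0∞)^p * ENNReal.ofReal (((2:ℝ)^q.1)⁻¹) with hSInf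
  have hmart : ∑' n, eLpNorm (F.mdiff f n) p' P ^ p ≤
      (ENNReal.ofReal K)^(2-p) * P A0 * SInf := by
    have hterm : ∀ n, n < S → eLpNorm (F.mdiff f n) p' P ^ p ≤
        ∑ q ∈ s, (‖x q‖₊ : ℝ≥0∞)^p * ∫⁻ ω, (‖F.mdiff (g q) n ω‖₊ : ℝ≥0∞)^p ∂P := by
      intro n hn
      rw [heLp_pow]
      have haebound : ∀ᵐ ω ∂P, (‖F.mdiff f n ω‖₊ : ℝ≥0∞)^p ≤
          ∑ q ∈ s, (‖x q‖₊ : ℝ≥0∞)^p * (‖F.mdiff (g q) n ω‖₊ : ℝ≥0∞)^p := by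
        filter_upwards [hae n, haeone n hn] with ω heq hone
        rw [heq]
        by_cases hz : ∀ q ∈ s, F.mdiff (g q) n ω = 0
        · have hzero : ∑ q ∈ s, F.mdiff (g q) n ω • x q = 0 :=
            Finset.sum_eq_zero fun q hq => by rw [hz q hq, zero_smul]
          rw [hzero]
          simp only [nnnorm_zero, ENNReal.coe_zero]
          rw [ENNReal.zero_rpow_of_pos hp0]
          exact zero_le
        · push_neg at hz
          obtain ⟨q0, hq0, hq0nz⟩ := hz
          have hsum : ∑ q ∈ s, F.mdiff (g q) n ω • x q = F.mdiff (g q0) n ω • x q0 :=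
            Finset.sum_eq_single_of_mem q0 hq0 (fun q hq hne => by
              rcases eq_or_ne (F.mdiff (g q) n ω) 0 with h | h
              · rw [h, zero_smul]
              · exact absurd (hone q hq q0 hq0 h hq0nz) hne)
          rw [hsum, nnnorm_smul, ENNReal.coe_mul,
            ENNReal.mul_rpow_of_nonneg _ _ hp0.le]
          refine le_trans (le_of_eq (mul_comm _ _)) ?_
          exact Finset.single_le_sum
            (f := fun q => (‖x q‖₊ : ℝ≥0∞)^p * (‖F.mdiff (g q) n ω‖₊ : ℝ≥0∞)^p)
            (fun q _ => zero_le) hq0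
      calc ∫⁻ ω, (‖F.mdiff f n ω‖₊ : ℝ≥0∞)^p ∂P
          ≤ ∫⁻ ω, ∑ q ∈ s, (‖x q‖₊ : ℝ≥0∞)^p * (‖F.mdiff (g q) n ω‖₊ : ℝ≥0∞)^p ∂P :=
            lintegral_mono_ae haebound
        _ = ∑ q ∈ s, ∫⁻ ω, (‖x q‖₊ : ℝ≥0∞)^p * (‖F.mdiff (g q) n ω‖₊ : ℝ≥0∞)^p ∂P :=
            lintegral_finset_sum s (fun q _ => ((hmes q n).const_mul _))
        _ = ∑ q ∈ s, (‖x q‖₊ : ℝ≥0∞)^p * ∫⁻ ω, (‖F.mdiff (g q) n ω‖₊ : ℝ≥0∞)^p ∂P :=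
            Finset.sum_congr rfl (fun q _ => lintegral_const_mul _ (hmes q n))
    have hzero' : ∀ n, S ≤ n → eLpNorm (F.mdiff f n) p' P ^ p = 0 := by
      intro n hn
      rw [F.mdiff_eq_zero hfsm hfint hn]
      rw [eLpNorm_zero, ENNReal.zero_rpow_of_pos hp0]
    rw [tsum_eq_sum (s := Finset.range S) (fun n hn => hzero' n (by simpa using hn))]
    calc ∑ n ∈ Finset.range S, eLpNorm (F.mdiff f n) p' P ^ p
        ≤ ∑ n ∈ Finset.range S, ∑ q ∈ s,
            (‖x q‖₊:ℝ≥0∞)^p * ∫⁻ ω, (‖F.mdiff (g q) n ω‖₊:ℝ≥0∞)^p ∂P :=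
          Finset.sum_le_sum fun n hn => hterm n (by simpa using hn)
      _ = ∑ q ∈ s, ∑ n ∈ Finset.range S,
            (‖x q‖₊:ℝ≥0∞)^p * ∫⁻ ω, (‖F.mdiff (g q) n ω‖₊:ℝ≥0∞)^p ∂P :=
          Finset.sum_comm
      _ = ∑ q ∈ s, (‖x q‖₊:ℝ≥0∞)^p *
            ∑ n ∈ Finset.range S, ∫⁻ ω, (‖F.mdiff (g q) n ω‖₊:ℝ≥0∞)^p ∂P := by
          exact Finset.sum_congr rfl fun q _ => (Finset.mul_sum _ _ _).symm
      _ ≤ ∑ q ∈ s, (‖x q‖₊:ℝ≥0∞)^p * ((ENNReal.ofReal K)^(2-p) * P (⋃₀ C (q.1, q.2))) := by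
          refine Finset.sum_le_sum fun q hq => mul_le_mul_right ?_ _
          refine le_trans (ENNReal.sum_le_tsum _) ?_
          refine F.tsum_lintegral_mdiff_rpow_le hp1 hp2 (hgmeas q hq) (hgb q hq)
            (hUmeas q.1 q.2 (by have := hq1 q hq; omega) (hq2 q hq)) (hgsupp q hq) ?_
          have := h9 q.1 q.2 (hq1 q hq) (hq2 q hq)
          simpa using this
      _ ≤ ∑ q ∈ s, (‖x q‖₊:ℝ≥0∞)^p * ((ENNReal.ofReal K)^(2-p) *
            (ENNReal.ofReal (((2:ℝ)^q.1)⁻¹) * P A0)) := by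
          refine Finset.sum_le_sum fun q hq => mul_le_mul_right (mul_le_mul_right ?_ _) _
          exact (h10 q.1 q.2 (by have := hq1 q hq; omega) (hq2 q hq)).2
      _ = (ENNReal.ofReal K)^(2-p) * P A0 * SInf := by
          rw [hSInf, Finset.mul_sum]
          refine Finset.sum_congr rfl fun q hq => ?_
          ring
  -- combine everything
  have hcomb := hineq f hfmem
  have hcombp : eLpNorm f p' P ^ p ≤ (ENNReal.ofReal T) ^ p * F.mtBound f p ^ p := by
    calc eLpNorm f p' P ^ p ≤ (ENNReal.ofReal T * F.mtBound f p) ^ p :=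
          ENNReal.rpow_le_rpow hcomb hp0.le
    _ = (ENNReal.ofReal T) ^ p * F.mtBound f p ^ p :=
          ENNReal.mul_rpow_of_nonneg _ _ hp0.le
  have hmtb : F.mtBound f p ^ p = (‖∫ ω, f ω ∂P‖₊ : ℝ≥0∞) ^ p +
      ∑' n, eLpNorm (F.mdiff f n) p' P ^ p := by
    rw [FilteredAtomic.mtBound, ← ENNReal.rpow_mul, one_div,
      inv_mul_cancel₀ (ne_of_gt hp0), ENNReal.rpow_one]
  have hmaster : ENNReal.ofReal (1 - δ) * P A0 * ENNReal.ofReal Lint ≤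
      (ENNReal.ofReal T) ^ p * P A0 *
        (ENNReal.ofReal ((6 * δ * Sx) ^ p) + (ENNReal.ofReal K)^(2-p) * SInf) := by
    calc ENNReal.ofReal (1 - δ) * P A0 * ENNReal.ofReal Lint ≤ eLpNorm f p' P ^ p := hlow
    _ ≤ (ENNReal.ofReal T) ^ p * F.mtBound f p ^ p := hcombp
    _ = (ENNReal.ofReal T) ^ p * ((‖∫ ω, f ω ∂P‖₊ : ℝ≥0∞) ^ p +
          ∑' n, eLpNorm (F.mdiff f n) p' P ^ p) := by rw [hmtb]
    _ ≤ (ENNReal.ofReal T) ^ p * (ENNReal.ofReal ((6 * δ * Sx) ^ p) * P A0 +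
          (ENNReal.ofReal K)^(2-p) * P A0 * SInf) :=
          mul_le_mul_right (add_le_add hE1 hmart) _
    _ = (ENNReal.ofReal T) ^ p * P A0 *
          (ENNReal.ofReal ((6 * δ * Sx) ^ p) + (ENNReal.ofReal K)^(2-p) * SInf) := by
          ring
  have hcancel : ENNReal.ofReal (1 - δ) * ENNReal.ofReal Lint ≤
      (ENNReal.ofReal T) ^ p *
        (ENNReal.ofReal ((6 * δ * Sx) ^ p) + (ENNReal.ofReal K)^(2-p) * SInf) := by
    rw [← ENNReal.mul_le_mul_iff_right (ne_of_gt hA0pos) (measure_ne_top P A0)]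
    calc P A0 * (ENNReal.ofReal (1 - δ) * ENNReal.ofReal Lint)
        = ENNReal.ofReal (1 - δ) * P A0 * ENNReal.ofReal Lint := by ring
      _ ≤ (ENNReal.ofReal T) ^ p * P A0 *
          (ENNReal.ofReal ((6 * δ * Sx) ^ p) + (ENNReal.ofReal K)^(2-p) * SInf) := hmaster
      _ = P A0 * ((ENNReal.ofReal T) ^ p *
          (ENNReal.ofReal ((6 * δ * Sx) ^ p) + (ENNReal.ofReal K)^(2-p) * SInf)) := by ring
  -- convert to a real inequality
  set Sr : ℝ := ∑ q ∈ s, ‖x q‖ ^ p * ((2:ℝ) ^ q.1)⁻¹ with hSr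
  have hSr0 : 0 ≤ Sr := Finset.sum_nonneg fun q _ => by positivity
  have hSInfr : SInf = ENNReal.ofReal Sr := by
    rw [hSInf, hSr, ENNReal.ofReal_sum_of_nonneg (fun q _ => by positivity)]
    refine Finset.sum_congr rfl fun q _ => ?_
    rw [ENNReal.ofReal_mul (by positivity), ← enorm_eq_nnnorm, ← ofReal_norm,
      ← ENNReal.ofReal_rpow_of_nonneg (norm_nonneg _) hp0.le]
  have hRHSreal : (ENNReal.ofReal T) ^ p *
      (ENNReal.ofReal ((6 * δ * Sx) ^ p) + (ENNReal.ofReal K)^(2-p) * SInf) =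
      ENNReal.ofReal (T ^ p * ((6 * δ * Sx) ^ p + K ^ (2-p) * Sr)) := by
    rw [hSInfr, ENNReal.ofReal_rpow_of_nonneg hT.le hp0.le,
      ENNReal.ofReal_rpow_of_nonneg hKpos.le (by linarith : (0:ℝ) ≤ 2 - p),
      ← ENNReal.ofReal_mul (by positivity),
      ← ENNReal.ofReal_add (by positivity) (by positivity),
      ← ENNReal.ofReal_mul (by positivity)]
  rw [hRHSreal, ← ENNReal.ofReal_mul (by linarith)] at hcancel
  have hfinal := (ENNReal.ofReal_le_ofReal_iff (by positivity)).mp hcancel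
  calc (1 - δ) * Lint ≤ T ^ p * ((6 * δ * Sx) ^ p + K ^ (2-p) * Sr) := hfinal
  _ = T ^ p * ((6 * δ * ∑ q ∈ s, ‖x q‖) ^ p +
        K ^ (2 - p) * ∑ q ∈ s, ‖x q‖ ^ p * ((2:ℝ) ^ q.1)⁻¹) := by rw [hSx, hSr]


end KeyDelta
end Paper

set_option maxHeartbeats 2000000 in
open MeasureTheory ENNReal in
/-- If ℰ supports all initial segments of a generalized Haar system with
constant `K` and the upper ℓ^p estimate holds for `X` with constant `T`, then `X` has Haar
type `p` with constant `T·K^{2/p-1}`. -/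
theorem statement_5 {Ω : Type*} [m0 : MeasurableSpace Ω] (P : Measure Ω)
    [IsProbabilityMeasure P] (F : Paper.FilteredAtomic Ω P)
    (p : ℝ) (hp1 : 1 < p) (hp2 : p ≤ 2)
    (K : ℝ) (hK : Paper.SupportsHaar F K)
    (X : Type*) [NormedAddCommGroup X] [NormedSpace ℝ X] [CompleteSpace X]
    (T : ℝ) (hT : 0 < T)
    (hineq : ∀ f : Ω → X, MemLp f (ENNReal.ofReal p) P →
      eLpNorm f (ENNReal.ofReal p) P ≤ ENNReal.ofReal T * F.mtBound f p) :
    Paper.HaarTypeWith X p (T * K ^ (2 / p - 1)) := by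
  intro s hs x
  have hp0 : (0:ℝ) < p := lt_trans one_pos hp1
  have hKpos : 0 < K := hK.1
  set Sx : ℝ := ∑ q ∈ s, ‖x q‖ with hSx
  have hSx0 : 0 ≤ Sx := Finset.sum_nonneg fun q _ => norm_nonneg _
  set Sr : ℝ := ∑ q ∈ s, ‖x q‖ ^ p * ((2:ℝ) ^ q.1)⁻¹ with hSr
  have hSr0 : 0 ≤ Sr := Finset.sum_nonneg fun q _ => by positivity
  set L : ℝ := ∫ t in Set.Ico (0:ℝ) 1, ‖∑ q ∈ s, Paper.haarFn q.1 q.2 t • x q‖ ^ p with hLdef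
  have hL0 : 0 ≤ L :=
    integral_nonneg fun t => Real.rpow_nonneg (norm_nonneg _) _
  have hTp0 : (0:ℝ) < T ^ p := Real.rpow_pos_of_pos hT p
  have key : ∀ δ : ℝ, 0 < δ → δ < 1 →
      (1 - δ) * L ≤ T ^ p * ((6 * δ * Sx) ^ p + K ^ (2 - p) * Sr) := fun δ h0 h1 =>
    Paper.key_delta F hp1 hp2 hK hT hineq s hs x h0 h1
  have hmain : L ≤ T ^ p * (K ^ (2 - p) * Sr) := by
    refine le_of_forall_pos_le_add fun η hη => ?_
    have hD0 : (0:ℝ) < T ^ p * 6 * Sx + L + 1 := by positivity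
    set δ : ℝ := min (1/2) (min (1/(6*Sx+1)) (η / (T ^ p * 6 * Sx + L + 1))) with hδdef
    have hδ0 : 0 < δ := by
      apply lt_min (by norm_num)
      apply lt_min (by positivity)
      positivity
    have hδ1 : δ < 1 := lt_of_le_of_lt (min_le_left _ _) (by norm_num)
    have hkey := key δ hδ0 hδ1
    have h6 : 6 * δ * Sx ≤ 1 := by
      have hδ2 : δ ≤ 1/(6*Sx+1) := le_trans (min_le_right _ _) (min_le_left _ _)
      have hden : (0:ℝ) < 6*Sx+1 := by linarith
      have h2' : δ * (6*Sx+1) ≤ 1 := (le_div_iff₀ hden).mp hδ2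
      nlinarith [hδ0.le, hSx0]
    have h6' : (6 * δ * Sx) ^ p ≤ 6 * δ * Sx := by
      have hbase : (0:ℝ) ≤ 6 * δ * Sx := by positivity
      rcases eq_or_lt_of_le hbase with he | hlt
      · rw [← he, Real.zero_rpow (ne_of_gt hp0)]
      · calc (6 * δ * Sx) ^ p ≤ (6 * δ * Sx) ^ (1:ℝ) :=
            Real.rpow_le_rpow_of_exponent_ge hlt h6 (by linarith)
        _ = 6 * δ * Sx := Real.rpow_one _
    have c2 : (1 - δ) * L ≤ T ^ p * (6 * δ * Sx) + T ^ p * (K ^ (2-p) * Sr) := by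
      refine hkey.trans ?_
      rw [mul_add]
      exact add_le_add_left (mul_le_mul_of_nonneg_left h6' hTp0.le) _
    have c4 : δ * (T ^ p * 6 * Sx + L + 1) ≤ η := by
      have hδ3 : δ ≤ η / (T ^ p * 6 * Sx + L + 1) :=
        le_trans (min_le_right _ _) (min_le_right _ _)
      rw [le_div_iff₀ hD0] at hδ3
      exact hδ3
    nlinarith [hδ0.le, mul_nonneg hδ0.le hL0]
  have h1p0 : (0:ℝ) ≤ 1/p := by positivity
  calc L ^ (1/p) ≤ (T ^ p * (K ^ (2 - p) * Sr)) ^ (1/p) :=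
        Real.rpow_le_rpow hL0 hmain h1p0
  _ = T * K ^ (2 / p - 1) * Sr ^ (1/p) := by
      have hexp : (2 - p) * (1/p) = 2/p - 1 := by field_simp
      rw [Real.mul_rpow hTp0.le (by positivity), Real.mul_rpow (by positivity) hSr0,
        ← Real.rpow_mul hT.le, ← Real.rpow_mul hKpos.le,
        mul_one_div_cancel (ne_of_gt hp0), Real.rpow_one, hexp]
      ring
end
end

section
/- Let (Ω, F, (F_n), P) be a filtered atomic probability space with associated collection ℰ, and let R ⊆ ℰ be a nested collection with Carleson constant [[R]] = ∞. Then for any ε̃ > 0, n ∈ ℕ and k ∈ ℕ there exist families of sets T_0, T_1, …, T_n and a set I_0 ∈ R such that: (i) T_0 = {I_0}; (ii) T_j ⊆ G_{kj}(R, I_0) for every j ∈ {1, …, n}; (iii) for every j ∈ {1, …, n} and every A ∈ T_{j−1}, P(A ∩ T_j*) > (1 − ε̃) P(A); (iv) each T_j, j ∈ {1, …, n}, is a finite family. -/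
open MeasureTheory ENNReal

noncomputable section

set_option linter.unusedSectionVars false

namespace CondAux

open Paper Set MeasureTheory ENNReal

variable {Ω : Type*} [m0 : MeasurableSpace Ω] {P : Measure Ω}

section Atoms

variable (F : Paper.FilteredAtomic Ω P)

lemma part_subset_atoms (n : ℕ) : (F.part n : Set (Set Ω)) ⊆ F.atoms :=
  fun _ hA => Set.mem_iUnion.2 ⟨n, hA⟩

lemma atoms_countable : F.atoms.Countable :=
  Set.countable_iUnion fun n => (F.part n).countable_toSet

lemma atom_meas {A : Set Ω} (hA : A ∈ F.atoms) : MeasurableSet A := by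
  obtain ⟨n, hn⟩ := Set.mem_iUnion.1 hA; exact F.meas n A hn

lemma atom_pos {A : Set Ω} (hA : A ∈ F.atoms) : 0 < P A := by
  obtain ⟨n, hn⟩ := Set.mem_iUnion.1 hA; exact F.pos n A hn

lemma atom_nonempty {A : Set Ω} (hA : A ∈ F.atoms) : A.Nonempty :=
  nonempty_of_measure_ne_zero (atom_pos F hA).ne'

lemma part_up (c : ℕ) : ∀ b, c ≤ b → ∀ B ∈ F.part b, ∃ D ∈ F.part c, B ⊆ D := by
  intro b
  induction b with
  | zero =>
      intro h B hB
      exact ⟨B, by simpa [Nat.le_zero.mp h] using hB, subset_rfl⟩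
  | succ b ih =>
      intro h B hB
      rcases Nat.lt_or_ge c (b + 1) with h' | h'
      · obtain ⟨B', hB', hsub⟩ := F.refined b B hB
        obtain ⟨D, hD, hsub'⟩ := ih (Nat.lt_succ_iff.mp h') B' hB'
        exact ⟨D, hD, hsub.trans hsub'⟩
      · have hcb : c = b + 1 := le_antisymm h h'
        exact ⟨B, hcb ▸ hB, subset_rfl⟩

lemma part_eq {n : ℕ} {A B : Set Ω} (hA : A ∈ F.part n) (hB : B ∈ F.part n)
    (h : (A ∩ B).Nonempty) : A = B := by
  by_contra hne
  have hd : Disjoint A B := F.disj n hA hB hne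
  rw [Set.disjoint_iff_inter_eq_empty] at hd
  exact h.ne_empty hd

lemma part_lt {a b : ℕ} {A B : Set Ω} (hA : A ∈ F.part a) (hB : B ∈ F.part b)
    (hsub : A ⊆ B) (hne : A ≠ B) : b < a := by
  by_contra h
  push_neg at h
  obtain ⟨D, hD, hBD⟩ := part_up F a b h B hB
  have hnA : A.Nonempty := atom_nonempty F (part_subset_atoms F a hA)
  have hAD : A = D := part_eq F hA hD (by
    rw [Set.inter_eq_self_of_subset_left (hsub.trans hBD)]; exact hnA)
  exact hne (subset_antisymm hsub (hBD.trans hAD.symm.subset))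

/-- The least partition level containing a given atom. -/
def lvl (F : Paper.FilteredAtomic Ω P) (A : Set Ω) : ℕ := sInf {n | A ∈ F.part n}

lemma lvl_mem {A : Set Ω} (hA : A ∈ F.atoms) : A ∈ F.part (lvl F A) := by
  obtain ⟨n, hn⟩ := Set.mem_iUnion.1 hA
  have h : lvl F A ∈ {n | A ∈ F.part n} := Nat.sInf_mem ⟨n, by simpa using hn⟩
  exact h

lemma lvl_lt {A B : Set Ω} (hA : A ∈ F.atoms) (hB : B ∈ F.atoms) (hsub : A ⊆ B)
    (hne : A ≠ B) : lvl F B < lvl F A :=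
  part_lt F (lvl_mem F hA) (lvl_mem F hB) hsub hne

end Atoms

section G1

variable (F : Paper.FilteredAtomic Ω P) (R : Set (Set Ω))

lemma exists_G1 (hRE : R ⊆ F.eColl) {A J : Set Ω} (hJ : J ∈ R) (hJA : J ⊂ A) :
    ∃ B ∈ Paper.G1 R A, J ⊆ B := by
  classical
  have hJat : J ∈ F.atoms := (hRE hJ).1
  have hne : ({n | ∃ C, C ∈ R ∧ J ⊆ C ∧ C ⊂ A ∧ C ∈ F.part n} : Set ℕ).Nonempty :=
    ⟨lvl F J, J, hJ, subset_rfl, hJA, lvl_mem F hJat⟩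
  obtain ⟨C, hCR, hJC, hCA, hCp⟩ := Nat.sInf_mem hne
  refine ⟨C, ⟨hCR, hCA, ?_⟩, hJC⟩
  intro D hDR hDA hCD
  by_contra hne'
  have hDat : D ∈ F.atoms := (hRE hDR).1
  have hlt : lvl F D < sInf {n | ∃ C, C ∈ R ∧ J ⊆ C ∧ C ⊂ A ∧ C ∈ F.part n} :=
    part_lt F hCp (lvl_mem F hDat) hCD hne'
  have hmem : lvl F D ∈ {n | ∃ C, C ∈ R ∧ J ⊆ C ∧ C ⊂ A ∧ C ∈ F.part n} :=
    ⟨D, hDR, hJC.trans hCD, hDA, lvl_mem F hDat⟩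
  exact absurd (Nat.sInf_le hmem) (by omega)

lemma G1_disj (hnest : Paper.Nested R) (A : Set Ω) :
    (Paper.G1 R A).PairwiseDisjoint id := by
  intro B hB C hC hne
  simp only [Function.onFun, id]
  by_contra hd
  rw [Set.not_disjoint_iff_nonempty_inter] at hd
  rcases hnest B hB.1 C hC.1 hd with h | h
  · exact hne (hB.2.2 C hC.1 hC.2.1 h)
  · exact hne ((hC.2.2 B hB.1 hB.2.1 h).symm)

lemma Gk_succ_def (m : ℕ) (A : Set Ω) :
    Paper.Gk R (m + 1) A = ⋃ J ∈ Paper.Gk R m A, Paper.G1 R J := rfl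

lemma Gk_zero (A : Set Ω) : Paper.Gk R 0 A = {A} := rfl

lemma Gk_succ_eq (m : ℕ) (A : Set Ω) :
    Paper.Gk R (m + 1) A = ⋃ B ∈ Paper.G1 R A, Paper.Gk R m B := by
  induction m generalizing A with
  | zero =>
      ext C
      simp [Gk_succ_def, Gk_zero]
  | succ m ih =>
      rw [Gk_succ_def, ih]
      simp only [Gk_succ_def (R := R) m]
      ext C
      simp only [Set.mem_iUnion, exists_prop]
      tauto

lemma Gk_sub : ∀ m (A C : Set Ω), C ∈ Paper.Gk R m A → C ⊆ A := by
  intro m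
  induction m with
  | zero => intro A C h; rw [Gk_zero] at h; simp at h; exact h ▸ subset_rfl
  | succ m ih =>
      intro A C h
      rw [Gk_succ_def] at h
      simp only [Set.mem_iUnion, exists_prop] at h
      obtain ⟨J, hJ, hC⟩ := h
      exact (hC.2.1.subset).trans (ih A J hJ)

lemma Gk_mem_R {m : ℕ} (hm : m ≠ 0) {A C : Set Ω} (h : C ∈ Paper.Gk R m A) : C ∈ R := by
  obtain ⟨m, rfl⟩ := Nat.exists_eq_succ_of_ne_zero hm
  rw [Gk_succ_def] at h
  simp only [Set.mem_iUnion, exists_prop] at h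
  obtain ⟨J, _, hC⟩ := h
  exact hC.1

lemma Gk_subset_insert (m : ℕ) (A : Set Ω) : Paper.Gk R m A ⊆ insert A R := by
  intro C hC
  rcases Nat.eq_zero_or_pos m with rfl | hm
  · rw [Gk_zero] at hC; simp at hC; exact hC ▸ Set.mem_insert _ _
  · exact Set.mem_insert_of_mem _ (Gk_mem_R R hm.ne' hC)

lemma Gk_countable (hRE : R ⊆ F.eColl) (m : ℕ) (A : Set Ω) :
    (Paper.Gk R m A).Countable :=
  (((atoms_countable F).mono (fun _ h => (hRE h).1)).insert A).mono (Gk_subset_insert R m A)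

lemma Gk_disj (hnest : Paper.Nested R) (A : Set Ω) :
    ∀ m, (Paper.Gk R m A).PairwiseDisjoint id := by
  intro m
  induction m with
  | zero => rw [Gk_zero]; exact Set.pairwiseDisjoint_singleton A id
  | succ m ih =>
      intro C hC C' hC' hne
      rw [Gk_succ_def] at hC hC'
      simp only [Set.mem_iUnion, exists_prop] at hC hC'
      obtain ⟨J, hJ, hCJ⟩ := hC
      obtain ⟨J', hJ', hCJ'⟩ := hC'
      by_cases hJJ : J = J'
      · subst hJJ
        exact G1_disj R hnest J hCJ hCJ' hne
      · have hd : Disjoint J J' := ih hJ hJ' hJJ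
        simp only [Function.onFun, id] at hd ⊢
        exact hd.mono hCJ.2.1.subset hCJ'.2.1.subset

lemma Gk_add : ∀ s t (A : Set Ω),
    Paper.Gk R (s + t) A = ⋃ B ∈ Paper.Gk R s A, Paper.Gk R t B := by
  intro s
  induction s with
  | zero =>
      intro t A
      rw [Nat.zero_add, Gk_zero]
      simp
  | succ s ih =>
      intro t A
      have h1 : s + 1 + t = (s + t) + 1 := by omega
      rw [h1, Gk_succ_eq, Gk_succ_eq]
      simp only [ih t]
      ext C
      simp only [Set.mem_iUnion, exists_prop]
      tauto

lemma exists_gen (hRE : R ⊆ F.eColl) {I J : Set Ω} (hI : I ∈ R) (hJ : J ∈ R)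
    (hJI : J ⊆ I) : ∃ m, J ∈ Paper.Gk R m I := by
  have key : ∀ D : ℕ, ∀ I, I ∈ R → ∀ J, J ∈ R → J ⊆ I → lvl F J ≤ lvl F I + D →
      ∃ m, J ∈ Paper.Gk R m I := by
    intro D
    induction D with
    | zero =>
        intro I hI J hJ hsub hlvl
        have hJI' : J = I := by
          by_contra hne
          have := lvl_lt F (hRE hJ).1 (hRE hI).1 hsub hne
          omega
        exact ⟨0, by rw [Gk_zero]; simp [hJI']⟩
    | succ D ih =>
        intro I hI J hJ hsub hlvl
        by_cases hne : J = I
        · exact ⟨0, by rw [Gk_zero]; simp [hne]⟩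
        · obtain ⟨B, hB, hJB⟩ := exists_G1 F R hRE hJ (hsub.ssubset_of_ne hne)
          have hBR : B ∈ R := hB.1
          have hlvlB : lvl F I < lvl F B :=
            lvl_lt F (hRE hBR).1 (hRE hI).1 hB.2.1.subset hB.2.1.ne
          obtain ⟨m, hm⟩ := ih B hBR J hJ hJB (by omega)
          refine ⟨m + 1, ?_⟩
          rw [Gk_succ_eq]
          exact Set.mem_biUnion hB hm
  exact key (lvl F J) I hI J hJ hJI (by omega)

end G1

end CondAux
namespace CondAux

section MeasureLayer

variable {Ω : Type*} [m0 : MeasurableSpace Ω] {P : Measure Ω} [IsProbabilityMeasure P]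
variable (F : Paper.FilteredAtomic Ω P) (R : Set (Set Ω))

open Paper Set MeasureTheory ENNReal

/-- `μ_m(A) = P(⋃ G_m(R,A))`. -/
def muG (R : Set (Set Ω)) (P : Measure Ω) (m : ℕ) (A : Set Ω) : ℝ≥0∞ :=
  P (⋃₀ Paper.Gk R m A)

/-- `ν_M(A) = ∑_{i<M} μ_i(A)`. -/
def nuG (R : Set (Set Ω)) (P : Measure Ω) (M : ℕ) (A : Set Ω) : ℝ≥0∞ :=
  ∑ i ∈ Finset.range M, muG R P i A

lemma muG_zero (A : Set Ω) : muG R P 0 A = P A := by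
  rw [muG, Gk_zero, Set.sUnion_singleton]

lemma muG_le (m : ℕ) (A : Set Ω) : muG R P m A ≤ P A :=
  measure_mono (Set.sUnion_subset fun _ hC => Gk_sub R m A _ hC)

lemma R_meas (hRE : R ⊆ F.eColl) {A : Set Ω} (hA : A ∈ R) : MeasurableSet A :=
  atom_meas F (hRE hA).1

lemma R_pos (hRE : R ⊆ F.eColl) {A : Set Ω} (hA : A ∈ R) : 0 < P A :=
  atom_pos F (hRE hA).1

lemma Gk_meas (hRE : R ⊆ F.eColl) {m : ℕ} {A C : Set Ω} (hA : A ∈ R)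
    (hC : C ∈ Paper.Gk R m A) : MeasurableSet C := by
  rcases Gk_subset_insert R m A hC with h | h
  · exact h ▸ R_meas F R hRE hA
  · exact R_meas F R hRE h

lemma sUnion_Gk_meas (hRE : R ⊆ F.eColl) {m : ℕ} {A : Set Ω} (hA : A ∈ R) :
    MeasurableSet (⋃₀ Paper.Gk R m A) :=
  MeasurableSet.sUnion (Gk_countable F R hRE m A) fun _ hC => Gk_meas F R hRE hA hC

lemma muG_succ (hRE : R ⊆ F.eColl) (hnest : Paper.Nested R) (m : ℕ) {A : Set Ω}
    (hA : A ∈ R) : muG R P (m + 1) A = ∑' B : Paper.G1 R A, muG R P m B := by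
  have h1 : ⋃₀ Paper.Gk R (m + 1) A = ⋃ B ∈ Paper.G1 R A, ⋃₀ Paper.Gk R m B := by
    rw [Gk_succ_eq]
    ext x
    simp only [Set.mem_sUnion, Set.mem_iUnion, exists_prop]
    tauto
  rw [muG, h1, measure_biUnion]
  · rfl
  · exact ((atoms_countable F).mono fun _ h => (hRE h).1).mono fun _ h => h.1
  · intro B hB C hC hne
    have hd : Disjoint B C := G1_disj R hnest A hB hC hne
    exact hd.mono (Set.sUnion_subset fun _ h => Gk_sub R m B _ h)
      (Set.sUnion_subset fun _ h => Gk_sub R m C _ h)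
  · exact fun B hB => sUnion_Gk_meas F R hRE hB.1

lemma nuG_succ (hRE : R ⊆ F.eColl) (hnest : Paper.Nested R) (M : ℕ) {A : Set Ω}
    (hA : A ∈ R) :
    nuG R P (M + 1) A = P A + ∑' B : Paper.G1 R A, nuG R P M B := by
  rw [nuG, Finset.sum_range_succ']
  simp only [muG_succ F R hRE hnest _ hA, muG_zero]
  rw [add_comm, ← Summable.tsum_finsetSum (fun i _ => ENNReal.summable)]
  rfl

lemma nuG_le (M : ℕ) (A : Set Ω) : nuG R P M A ≤ (M : ℝ≥0∞) * P A := by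
  calc nuG R P M A ≤ ∑ _i ∈ Finset.range M, P A :=
        Finset.sum_le_sum fun i _ => muG_le R i A
    _ = (M : ℝ≥0∞) * P A := by
        rw [Finset.sum_const, Finset.card_range, nsmul_eq_mul]

lemma exists_big (hRE : R ⊆ F.eColl) (hnest : Paper.Nested R)
    (hcarl : Paper.carleson P R = ⊤) (L : ℝ≥0∞) (hL : L ≠ ⊤) :
    ∃ I ∈ R, ∃ M, L * P I < nuG R P M I := by
  have h1 : L < ⨆ I ∈ R, (P I)⁻¹ * ∑' J : {J : Set Ω // J ∈ R ∧ J ⊆ I}, P (J : Set Ω) := by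
    rw [← Paper.carleson, hcarl]
    exact hL.lt_top
  rw [lt_iSup_iff] at h1
  obtain ⟨I, h1⟩ := h1
  rw [lt_iSup_iff] at h1
  obtain ⟨hI, h1⟩ := h1
  refine ⟨I, hI, ?_⟩
  have hP0 : P I ≠ 0 := (R_pos F R hRE hI).ne'
  have hPt : P I ≠ ⊤ := measure_ne_top P I
  -- L * P I < σ(I)
  have h2 : L * P I < ∑' J : {J : Set Ω // J ∈ R ∧ J ⊆ I}, P (J : Set Ω) := by
    have h3 := (ENNReal.mul_lt_mul_iff_left hP0 hPt).2 h1
    calc L * P I < (P I)⁻¹ * (∑' J : {J : Set Ω // J ∈ R ∧ J ⊆ I}, P (J : Set Ω)) * P I :=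
          h3
      _ = (P I)⁻¹ * P I * (∑' J : {J : Set Ω // J ∈ R ∧ J ⊆ I}, P (J : Set Ω)) := by ring
      _ = ∑' J : {J : Set Ω // J ∈ R ∧ J ⊆ I}, P (J : Set Ω) := by
          rw [ENNReal.inv_mul_cancel hP0 hPt, one_mul]
  -- σ(I) ≤ ∑' m, μ_m(I)
  have h4 : (∑' J : {J : Set Ω // J ∈ R ∧ J ⊆ I}, P (J : Set Ω)) ≤
      ∑' m : ℕ, muG R P m I := by
    have hgen : ∀ J : {J : Set Ω // J ∈ R ∧ J ⊆ I}, ∃ m, (J : Set Ω) ∈ Paper.Gk R m I :=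
      fun J => exists_gen F R hRE hI J.2.1 J.2.2
    choose gen hgen using hgen
    let φ : {J : Set Ω // J ∈ R ∧ J ⊆ I} → Σ m : ℕ, Paper.Gk R m I :=
      fun J => ⟨gen J, ⟨(J : Set Ω), hgen J⟩⟩
    have hinj : Function.Injective φ := by
      intro a b h
      have := congrArg (fun p : Σ m : ℕ, Paper.Gk R m I => (p.2 : Set Ω)) h
      exact Subtype.ext this
    calc (∑' J : {J : Set Ω // J ∈ R ∧ J ⊆ I}, P (J : Set Ω))
        = ∑' J : {J : Set Ω // J ∈ R ∧ J ⊆ I},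
            (fun p : Σ m : ℕ, Paper.Gk R m I => P (p.2 : Set Ω)) (φ J) := rfl
      _ ≤ ∑' p : Σ m : ℕ, Paper.Gk R m I, P (p.2 : Set Ω) :=
          ENNReal.tsum_comp_le_tsum_of_injective hinj _
      _ = ∑' (m : ℕ) (C : Paper.Gk R m I), P (C : Set Ω) := ENNReal.tsum_sigma' _
      _ = ∑' m : ℕ, muG R P m I := by
          refine tsum_congr fun m => ?_
          rw [muG, measure_sUnion (Gk_countable F R hRE m I)
            (fun a ha b hb hne => Gk_disj R hnest I m ha hb hne)
            (fun C hC => Gk_meas F R hRE hI hC)]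
  have h5 : L * P I < ⨆ M : ℕ, ∑ i ∈ Finset.range M, muG R P i I := by
    rw [← ENNReal.tsum_eq_iSup_nat]
    exact lt_of_lt_of_le h2 h4
  rw [lt_iSup_iff] at h5
  exact h5

end MeasureLayer

end CondAux
namespace CondAux

section StepLemma

variable {Ω : Type*} [m0 : MeasurableSpace Ω] {P : Measure Ω} [IsProbabilityMeasure P]
variable (F : Paper.FilteredAtomic Ω P) (R : Set (Set Ω))

open Paper Set MeasureTheory ENNReal

lemma step (hRE : R ⊆ F.eColl) (hnest : Paper.Nested R)
    {L q1 q2 m : ℕ} (hq1 : q1 ≤ L) (hq2 : q2 ≤ L) (hq2pos : 1 ≤ q2)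
    {ε₁ : ℝ} (hε₁ : 0 < ε₁) (hε₁1 : ε₁ ≤ 1 / 2)
    (hq : (q1 : ℝ) + 1 ≤ ε₁ * q2)
    (hmin : ∀ C ∈ R, nuG R P m C ≤ (L : ℝ≥0∞) * P C)
    {B : Set Ω} (hB : B ∈ R)
    (hBbig : ((L - q1 : ℕ) : ℝ≥0∞) * P B < nuG R P (m + 1) B) :
    ∃ S : Set (Set Ω), S.Finite ∧
      (∀ C ∈ S, C ∈ Paper.G1 R B ∧ ((L - q2 : ℕ) : ℝ≥0∞) * P C < nuG R P m C) ∧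
      ⋃₀ S ⊆ B ∧ ENNReal.ofReal (1 - ε₁) * P B ≤ P (⋃₀ S) := by
  classical
  set good : Set (Set Ω) :=
    {C | C ∈ Paper.G1 R B ∧ ((L - q2 : ℕ) : ℝ≥0∞) * P C < nuG R P m C} with hgood_def
  set bad : Set (Set Ω) :=
    {C | C ∈ Paper.G1 R B ∧ ¬ ((L - q2 : ℕ) : ℝ≥0∞) * P C < nuG R P m C} with hbad_def
  have hgsub : good ⊆ Paper.G1 R B := fun C hC => hC.1
  have hbsub : bad ⊆ Paper.G1 R B := fun C hC => hC.1
  have hG1R : Paper.G1 R B ⊆ R := fun C hC => hC.1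
  have hG1cnt : (Paper.G1 R B).Countable :=
    ((atoms_countable F).mono fun _ h => (hRE h).1).mono hG1R
  have hgcnt : good.Countable := hG1cnt.mono hgsub
  have hbcnt : bad.Countable := hG1cnt.mono hbsub
  have hG1disj := G1_disj R hnest B
  have hgdisj : good.Pairwise Disjoint :=
    fun a ha b hb hne => hG1disj (hgsub ha) (hgsub hb) hne
  have hbdisj : bad.Pairwise Disjoint :=
    fun a ha b hb hne => hG1disj (hbsub ha) (hbsub hb) hne
  have hgmeas : ∀ C ∈ good, MeasurableSet C := fun C hC => R_meas F R hRE (hG1R (hgsub hC))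
  have hbmeas : ∀ C ∈ bad, MeasurableSet C := fun C hC => R_meas F R hRE (hG1R (hbsub hC))
  have hUg_meas : MeasurableSet (⋃₀ good) := MeasurableSet.sUnion hgcnt hgmeas
  have hUb_meas : MeasurableSet (⋃₀ bad) := MeasurableSet.sUnion hbcnt hbmeas
  have hUgB : ⋃₀ good ⊆ B := Set.sUnion_subset fun C hC => (hgsub hC).2.1.subset
  have hUbB : ⋃₀ bad ⊆ B := Set.sUnion_subset fun C hC => (hbsub hC).2.1.subset
  have hUgP : P (⋃₀ good) = ∑' C : good, P (C : Set Ω) :=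
    measure_sUnion hgcnt hgdisj hgmeas
  have hUbP : P (⋃₀ bad) = ∑' C : bad, P (C : Set Ω) :=
    measure_sUnion hbcnt hbdisj hbmeas
  -- sum bound
  have hGeq : Paper.G1 R B = good ∪ bad := by
    ext C
    simp only [hgood_def, hbad_def, Set.mem_union, Set.mem_setOf_eq]
    tauto
  have hsplit : (∑' C : Paper.G1 R B, nuG R P m C) ≤
      (∑' C : good, nuG R P m C) + ∑' C : bad, nuG R P m C := by
    calc (∑' C : Paper.G1 R B, nuG R P m C)
        = ∑' C : ↑(good ∪ bad), nuG R P m C := by rw [← hGeq]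
      _ ≤ _ := ENNReal.tsum_union_le (fun C => nuG R P m C) good bad
  have hgoodle : (∑' C : good, nuG R P m C) ≤ (L : ℝ≥0∞) * P (⋃₀ good) := by
    calc (∑' C : good, nuG R P m C) ≤ ∑' C : good, (L : ℝ≥0∞) * P (C : Set Ω) :=
          ENNReal.tsum_le_tsum fun C => hmin _ (hG1R (hgsub C.2))
      _ = (L : ℝ≥0∞) * ∑' C : good, P (C : Set Ω) := ENNReal.tsum_mul_left
      _ = (L : ℝ≥0∞) * P (⋃₀ good) := by rw [hUgP]
  have hbadle : (∑' C : bad, nuG R P m C) ≤ ((L - q2 : ℕ) : ℝ≥0∞) * P (⋃₀ bad) := by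
    calc (∑' C : bad, nuG R P m C)
        ≤ ∑' C : bad, ((L - q2 : ℕ) : ℝ≥0∞) * P (C : Set Ω) :=
          ENNReal.tsum_le_tsum fun C => not_lt.mp C.2.2
      _ = ((L - q2 : ℕ) : ℝ≥0∞) * ∑' C : bad, P (C : Set Ω) := ENNReal.tsum_mul_left
      _ = ((L - q2 : ℕ) : ℝ≥0∞) * P (⋃₀ bad) := by rw [hUbP]
  have key : ((L - q1 : ℕ) : ℝ≥0∞) * P B <
      P B + ((L : ℝ≥0∞) * P (⋃₀ good) + ((L - q2 : ℕ) : ℝ≥0∞) * P (⋃₀ bad)) := by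
    refine lt_of_lt_of_le hBbig ?_
    rw [nuG_succ F R hRE hnest m hB]
    exact add_le_add_right (hsplit.trans (add_le_add hgoodle hbadle)) _
  have hPgb : P (⋃₀ good) + P (⋃₀ bad) ≤ P B := by
    have hdisj : Disjoint (⋃₀ good) (⋃₀ bad) := by
      rw [Set.disjoint_sUnion_left]
      intro C hC
      rw [Set.disjoint_sUnion_right]
      intro D hD
      refine hG1disj (hgsub hC) (hbsub hD) ?_
      rintro rfl
      exact hD.2 hC.2
    calc P (⋃₀ good) + P (⋃₀ bad) = P (⋃₀ good ∪ ⋃₀ bad) :=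
          (measure_union hdisj hUb_meas).symm
      _ ≤ P B := measure_mono (Set.union_subset hUgB hUbB)
  -- pass to the reals
  have hPBt : P B ≠ ⊤ := measure_ne_top P B
  have hPB0 : P B ≠ 0 := (R_pos F R hRE hB).ne'
  set x : ℝ := (P B).toReal with hx_def
  set g : ℝ := (P (⋃₀ good)).toReal with hg_def
  set b : ℝ := (P (⋃₀ bad)).toReal with hb_def
  have hxpos : 0 < x := ENNReal.toReal_pos hPB0 hPBt
  have hgnn : 0 ≤ g := ENNReal.toReal_nonneg
  have hbnn : 0 ≤ b := ENNReal.toReal_nonneg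
  have hUgt : P (⋃₀ good) ≠ ⊤ := measure_ne_top P _
  have hUbt : P (⋃₀ bad) ≠ ⊤ := measure_ne_top P _
  have hkeyR : ((L - q1 : ℕ) : ℝ) * x < x + ((L : ℝ) * g + ((L - q2 : ℕ) : ℝ) * b) := by
    have h := (ENNReal.toReal_lt_toReal (by finiteness) (by finiteness)).2 key
    rw [ENNReal.toReal_mul, ENNReal.toReal_add (by finiteness) (by finiteness),
      ENNReal.toReal_add (by finiteness) (by finiteness), ENNReal.toReal_mul,
      ENNReal.toReal_mul] at h
    simpa only [ENNReal.toReal_natCast] using h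
  have hsumR : g + b ≤ x := by
    have h := ENNReal.toReal_mono hPBt hPgb
    rwa [ENNReal.toReal_add hUgt hUbt] at h
  have hcast1 : ((L - q1 : ℕ) : ℝ) = (L : ℝ) - (q1 : ℝ) := by
    rw [Nat.cast_sub hq1]
  have hcast2 : ((L - q2 : ℕ) : ℝ) = (L : ℝ) - (q2 : ℝ) := by
    rw [Nat.cast_sub hq2]
  have hq2R : (1 : ℝ) ≤ (q2 : ℝ) := by exact_mod_cast hq2pos
  have hq2LR : (q2 : ℝ) ≤ (L : ℝ) := by exact_mod_cast hq2
  -- the elementary computation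
  have htarget : (1 - ε₁) * x < g := by
    rw [hcast1, hcast2] at hkeyR
    have e1 : ((L : ℝ) - q2) * b ≤ ((L : ℝ) - q2) * (x - g) :=
      mul_le_mul_of_nonneg_left (by linarith) (by linarith)
    have e2 : ((L : ℝ) - q1) * x < x + ((L : ℝ) * g + ((L : ℝ) - q2) * (x - g)) := by
      linarith
    have e3 : ((q2 : ℝ) - q1 - 1) * x < (q2 : ℝ) * g := by nlinarith [e2]
    have e4 : (q2 : ℝ) * ((1 - ε₁) * x) < (q2 : ℝ) * g := by nlinarith [e3, hq, hxpos.le]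
    exact lt_of_mul_lt_mul_left e4 (by linarith)
  -- back to ℝ≥0∞ and finite extraction
  have hgpos : 0 < g := lt_of_le_of_lt (by nlinarith [hxpos]) htarget
  have h5 : ENNReal.ofReal (1 - ε₁) * P B < P (⋃₀ good) := by
    have h6 : ENNReal.ofReal (1 - ε₁) * P B = ENNReal.ofReal ((1 - ε₁) * x) := by
      rw [ENNReal.ofReal_mul (by linarith), ENNReal.ofReal_toReal hPBt]
    rw [h6, ← ENNReal.ofReal_toReal hUgt]
    exact (ENNReal.ofReal_lt_ofReal_iff hgpos).2 htarget
  have h7 : ENNReal.ofReal (1 - ε₁) * P B <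
      ⨆ s : Finset good, ∑ C ∈ s, P (C : Set Ω) := by
    rw [← ENNReal.tsum_eq_iSup_sum, ← hUgP]
    exact h5
  rw [lt_iSup_iff] at h7
  obtain ⟨s, hs⟩ := h7
  refine ⟨Subtype.val '' (s : Set good), (s.finite_toSet.image _), ?_, ?_, ?_⟩
  · rintro C ⟨C', _, rfl⟩
    exact C'.2
  · rintro x ⟨C, ⟨C', _, rfl⟩, hx⟩
    exact (hgsub C'.2).2.1.subset hx
  · have he : ⋃₀ (Subtype.val '' (s : Set good)) = ⋃ C ∈ s, (C : Set Ω) := by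
      rw [Set.sUnion_image, Finset.set_biUnion_coe]
    have hd : Set.Pairwise (s : Set good) (Function.onFun Disjoint fun C : good => (C : Set Ω)) :=
      fun a _ b _ hne => hgdisj a.2 b.2 (Subtype.coe_injective.ne hne)
    rw [he, measure_biUnion_finset hd fun C _ => hgmeas _ C.2]
    exact hs.le

end StepLemma

end CondAux
open MeasureTheory ENNReal in
/-- Carleson–Garnett condensation lemma. -/
theorem statement_6 {Ω : Type*} [m0 : MeasurableSpace Ω] (P : Measure Ω)
    [IsProbabilityMeasure P] (F : Paper.FilteredAtomic Ω P)
    (R : Set (Set Ω)) (hRE : R ⊆ F.eColl) (hnest : Paper.Nested R)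
    (hcarl : Paper.carleson P R = ⊤)
    (ε : ℝ) (hε : 0 < ε) (n k : ℕ) :
    ∃ (T : ℕ → Set (Set Ω)) (I0 : Set Ω), I0 ∈ R ∧
      -- (i)
      T 0 = {I0} ∧
      -- (ii)
      (∀ j, 1 ≤ j → j ≤ n → T j ⊆ Paper.Gk R (k * j) I0) ∧
      -- (iii)
      (∀ j, 1 ≤ j → j ≤ n → ∀ A ∈ T (j - 1),
        ENNReal.ofReal (1 - ε) * P A < P (A ∩ ⋃₀ T j)) ∧
      -- (iv)
      (∀ j, 1 ≤ j → j ≤ n → (T j).Finite) := by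
  classical
  have hRpos : ∀ {A : Set Ω}, A ∈ R → P A ≠ 0 := fun hA => (CondAux.R_pos F R hRE hA).ne'
  have hRtop : ∀ A : Set Ω, P A ≠ ⊤ := fun A => measure_ne_top P A
  by_cases hdeg : k = 0 ∨ n = 0
  · -- degenerate case: a constant singleton family works
    obtain ⟨Ideg, hIdeg, -⟩ :=
      CondAux.exists_big F R hRE hnest hcarl 0 (by simp)
    refine ⟨fun _ => {Ideg}, Ideg, hIdeg, rfl, ?_, ?_, ?_⟩
    · intro j hj1 hjn
      rcases hdeg with hk | hn
      · subst hk
        rw [Nat.zero_mul, CondAux.Gk_zero]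
      · omega
    · intro j hj1 hjn A hA
      rcases hdeg with hk | hn
      · simp only [Set.mem_singleton_iff] at hA
        subst hA
        rw [Set.sUnion_singleton, Set.inter_self]
        calc ENNReal.ofReal (1 - ε) * P A < 1 * P A :=
              (ENNReal.mul_lt_mul_iff_left (hRpos hIdeg) (hRtop _)).2
                (ENNReal.ofReal_lt_one.2 (by linarith))
          _ = P A := one_mul _
      · omega
    · intro j _ _
      exact Set.finite_singleton _
  push_neg at hdeg
  obtain ⟨hk0, hn0⟩ := hdeg
  have hk1 : 1 ≤ k := Nat.one_le_iff_ne_zero.2 hk0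
  have hn1 : 1 ≤ n := Nat.one_le_iff_ne_zero.2 hn0
  set N : ℕ := n * k with hNdef
  -- the small parameters
  have hmin01 : 0 < min ε 1 := lt_min hε one_pos
  set ε' : ℝ := min ε 1 / 2 with hε'def
  have hε'pos : 0 < ε' := by rw [hε'def]; linarith
  have hε'half : ε' ≤ 1 / 2 := by
    have h1 : min ε 1 ≤ 1 := min_le_right _ _
    rw [hε'def]; linarith
  have hε'lt : ε' < ε := by
    have h1 : min ε 1 ≤ ε := min_le_left _ _
    rw [hε'def]; linarith
  set ε₁ : ℝ := ε' / k with hε₁def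
  have hkR : (0 : ℝ) < (k : ℝ) := by exact_mod_cast hk1
  have hε₁pos : 0 < ε₁ := div_pos hε'pos hkR
  have hε₁half : ε₁ ≤ 1 / 2 := by
    have h1 : ε₁ ≤ ε' := by
      rw [hε₁def]
      exact div_le_self hε'pos.le (by exact_mod_cast hk1)
    linarith
  have hkε₁ : (k : ℝ) * ε₁ = ε' := by
    rw [hε₁def]; field_simp
  -- the threshold sequence
  set q : ℕ := ⌈1 / ε₁⌉₊ with hqdef
  have hq1 : 1 ≤ q := by
    rw [hqdef]
    exact Nat.one_le_iff_ne_zero.2 (Nat.ceil_pos.2 (by positivity)).ne'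
  obtain ⟨d, hd0, hdsucc⟩ : ∃ d : ℕ → ℕ, d 0 = 0 ∧ ∀ i, d (i + 1) = q * (d i + 1) :=
    ⟨fun i => Nat.rec 0 (fun _ di => q * (di + 1)) i, rfl, fun _ => rfl⟩
  have hdpos : ∀ i, 1 ≤ d (i + 1) := by
    intro i; rw [hdsucc]
    calc 1 = 1 * 1 := rfl
      _ ≤ q * (d i + 1) := Nat.mul_le_mul hq1 (by omega)
  have hdM : Monotone d := monotone_nat_of_le_succ fun i => by
    rw [hdsucc]
    calc d i ≤ d i + 1 := by omega
      _ ≤ q * (d i + 1) := Nat.le_mul_of_pos_left _ (by omega)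
  have hdkey : ∀ i, (d i : ℝ) + 1 ≤ ε₁ * d (i + 1) := by
    intro i
    rw [hdsucc]
    have hce : (1 : ℝ) / ε₁ ≤ (q : ℝ) := by rw [hqdef]; exact Nat.le_ceil _
    have hcast : ((q * (d i + 1) : ℕ) : ℝ) = (q : ℝ) * ((d i : ℝ) + 1) := by
      push_cast; ring
    rw [hcast]
    calc (d i : ℝ) + 1 = ε₁ * ((1 / ε₁) * ((d i : ℝ) + 1)) := by field_simp
      _ ≤ ε₁ * ((q : ℝ) * ((d i : ℝ) + 1)) := by
          refine mul_le_mul_of_nonneg_left ?_ hε₁pos.le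
          exact mul_le_mul_of_nonneg_right hce (by positivity)
  set L : ℕ := d N + N + 1 with hLdef
  have hdleL : ∀ i, i ≤ N → d i ≤ L := fun i hi => by
    have := hdM hi; omega
  have hNL : N ≤ L := by omega
  -- choose `I0` and the minimal budget `M₀`
  obtain ⟨I1, hI1, M1, hM1⟩ :=
    CondAux.exists_big F R hRE hnest hcarl (L : ℝ≥0∞) (by simp)
  have hQ : ∃ M, ∃ I, I ∈ R ∧ (L : ℝ≥0∞) * P I < CondAux.nuG R P M I :=
    ⟨M1, I1, hI1, hM1⟩
  set M₀ : ℕ := Nat.find hQ with hM₀def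
  obtain ⟨I0, hI0R, hI0big⟩ : ∃ I, I ∈ R ∧ (L : ℝ≥0∞) * P I < CondAux.nuG R P M₀ I :=
    Nat.find_spec hQ
  have hminM : ∀ M, M < M₀ → ∀ C ∈ R, CondAux.nuG R P M C ≤ (L : ℝ≥0∞) * P C := by
    intro M hM C hC
    have h := Nat.find_min hQ (m := M) hM
    push_neg at h
    exact h C hC
  have hLM₀ : L < M₀ := by
    have h1 : (L : ℝ≥0∞) * P I0 < (M₀ : ℝ≥0∞) * P I0 :=
      lt_of_lt_of_le hI0big (CondAux.nuG_le R M₀ I0)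
    have h2 : (L : ℝ≥0∞) < (M₀ : ℝ≥0∞) :=
      (ENNReal.mul_lt_mul_iff_left (hRpos hI0R) (hRtop _)).1 h1
    exact_mod_cast h2
  -- one refinement step
  have hex : ∀ i, i < N → ∀ B, B ∈ R →
      ((L - d i : ℕ) : ℝ≥0∞) * P B < CondAux.nuG R P (M₀ - i) B →
      ∃ S : Set (Set Ω), S.Finite ∧
        (∀ C ∈ S, C ∈ Paper.G1 R B ∧
          ((L - d (i + 1) : ℕ) : ℝ≥0∞) * P C < CondAux.nuG R P (M₀ - (i + 1)) C) ∧
        ⋃₀ S ⊆ B ∧ ENNReal.ofReal (1 - ε₁) * P B ≤ P (⋃₀ S) := by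
    intro i hiN B hBR hBbig
    have hMi : M₀ - i = (M₀ - (i + 1)) + 1 := by omega
    rw [hMi] at hBbig
    exact CondAux.step F R hRE hnest (hdleL i hiN.le) (hdleL (i + 1) hiN)
      (hdpos i)
      hε₁pos hε₁half (hdkey i) (hminM (M₀ - (i + 1)) (by omega)) hBR hBbig
  -- the choice function
  obtain ⟨pick, hpick⟩ : ∃ pick : ℕ → Set Ω → Set (Set Ω), ∀ i B,
      (∃ S : Set (Set Ω), S.Finite ∧
        (∀ C ∈ S, C ∈ Paper.G1 R B ∧
          ((L - d (i + 1) : ℕ) : ℝ≥0∞) * P C < CondAux.nuG R P (M₀ - (i + 1)) C) ∧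
        ⋃₀ S ⊆ B ∧ ENNReal.ofReal (1 - ε₁) * P B ≤ P (⋃₀ S)) →
      ((pick i B).Finite ∧
        (∀ C ∈ pick i B, C ∈ Paper.G1 R B ∧
          ((L - d (i + 1) : ℕ) : ℝ≥0∞) * P C < CondAux.nuG R P (M₀ - (i + 1)) C) ∧
        ⋃₀ (pick i B) ⊆ B ∧
        ENNReal.ofReal (1 - ε₁) * P B ≤ P (⋃₀ (pick i B))) := by
    refine ⟨fun i B =>
      if h : (∃ S : Set (Set Ω), S.Finite ∧
        (∀ C ∈ S, C ∈ Paper.G1 R B ∧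
          ((L - d (i + 1) : ℕ) : ℝ≥0∞) * P C < CondAux.nuG R P (M₀ - (i + 1)) C) ∧
        ⋃₀ S ⊆ B ∧ ENNReal.ofReal (1 - ε₁) * P B ≤ P (⋃₀ S)) then h.choose else ∅,
      fun i B h => ?_⟩
    dsimp only
    rw [dif_pos h]
    exact h.choose_spec
  -- the recursively defined families
  obtain ⟨S, hS0, hSsucc⟩ : ∃ S : ℕ → Set (Set Ω), S 0 = {I0} ∧
      ∀ i, S (i + 1) = ⋃ B ∈ S i, pick i B :=
    ⟨fun i => Nat.rec {I0} (fun i' Si => ⋃ B ∈ Si, pick i' B) i, rfl, fun _ => rfl⟩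
  -- invariants
  have inv : ∀ i, i ≤ N → (S i).Finite ∧ S i ⊆ Paper.Gk R i I0 ∧
      ∀ B ∈ S i, B ∈ R ∧ ((L - d i : ℕ) : ℝ≥0∞) * P B < CondAux.nuG R P (M₀ - i) B := by
    intro i
    induction i with
    | zero =>
        intro _
        refine ⟨by rw [hS0]; exact Set.finite_singleton _,
          by rw [hS0, CondAux.Gk_zero], ?_⟩
        intro B hB
        rw [hS0, Set.mem_singleton_iff] at hB
        subst hB
        refine ⟨hI0R, ?_⟩
        rw [hd0, Nat.sub_zero, Nat.sub_zero]
        exact hI0big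
    | succ i ih =>
        intro hi
        have hiN : i ≤ N := by omega
        obtain ⟨hfin, hsub, hmem⟩ := ih hiN
        have hprops : ∀ B ∈ S i, ((pick i B).Finite ∧
            (∀ C ∈ pick i B, C ∈ Paper.G1 R B ∧
              ((L - d (i + 1) : ℕ) : ℝ≥0∞) * P C < CondAux.nuG R P (M₀ - (i + 1)) C) ∧
            ⋃₀ (pick i B) ⊆ B ∧
            ENNReal.ofReal (1 - ε₁) * P B ≤ P (⋃₀ (pick i B))) :=
          fun B hB => hpick i B (hex i (by omega) B (hmem B hB).1 (hmem B hB).2)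
        rw [hSsucc i]
        refine ⟨hfin.biUnion fun B hB => (hprops B hB).1, ?_, ?_⟩
        · intro C hC
          simp only [Set.mem_iUnion, exists_prop] at hC
          obtain ⟨B, hB, hC⟩ := hC
          have hCG1 : C ∈ Paper.G1 R B := ((hprops B hB).2.1 C hC).1
          rw [CondAux.Gk_succ_def]
          exact Set.mem_biUnion (hsub hB) hCG1
        · intro C hC
          simp only [Set.mem_iUnion, exists_prop] at hC
          obtain ⟨B, hB, hC⟩ := hC
          obtain ⟨h1, h2⟩ := (hprops B hB).2.1 C hC
          exact ⟨h1.1, h2⟩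
  -- one-step covering
  have cov : ∀ i, i < N → ∀ B ∈ S i,
      ENNReal.ofReal (1 - ε₁) * P B ≤ P (B ∩ ⋃₀ S (i + 1)) := by
    intro i hiN B hB
    obtain ⟨-, -, hmem⟩ := inv i hiN.le
    obtain ⟨hBR, hBbig⟩ := hmem B hB
    obtain ⟨-, -, hsubB, hcov⟩ := hpick i B (hex i hiN B hBR hBbig)
    refine le_trans hcov (measure_mono ?_)
    rintro x ⟨C, hC, hxC⟩
    refine ⟨hsubB ⟨C, hC, hxC⟩, ?_⟩
    rw [hSsucc i]
    exact ⟨C, Set.mem_biUnion hB hC, hxC⟩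
  -- multi-step covering
  have comp : ∀ r i, i + r ≤ N → ∀ B ∈ S i,
      ENNReal.ofReal ((1 - ε₁) ^ r) * P B ≤ P (B ∩ ⋃₀ S (i + r)) := by
    intro r
    induction r with
    | zero =>
        intro i hiN B hB
        rw [pow_zero, ENNReal.ofReal_one, one_mul]
        exact measure_mono (Set.subset_inter subset_rfl (Set.subset_sUnion_of_mem hB))
    | succ r ih =>
        intro i hiN B hB
        have hiN' : i + r ≤ N := by omega
        obtain ⟨hfinIr, hsubIr, hmemIr⟩ := inv (i + r) hiN'
        obtain ⟨hfinI, hsubI, hmemI⟩ := inv i (by omega)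
        obtain ⟨hfinIr1, -, hmemIr1⟩ := inv (i + r + 1) (by omega)
        set 𝒞 : Set (Set Ω) := {C | C ∈ S (i + r) ∧ C ⊆ B} with h𝒞def
        have h𝒞sub : 𝒞 ⊆ S (i + r) := fun C hC => hC.1
        have h𝒞cnt : 𝒞.Countable := (hfinIr.subset h𝒞sub).countable
        have h𝒞disj : 𝒞.PairwiseDisjoint id := fun a ha b hb hne =>
          CondAux.Gk_disj R hnest I0 (i + r) (hsubIr (h𝒞sub ha)) (hsubIr (h𝒞sub hb)) hne
        have h𝒞meas : ∀ C ∈ 𝒞, MeasurableSet C := fun C hC =>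
          CondAux.R_meas F R hRE (hmemIr C (h𝒞sub hC)).1
        have hU1meas : MeasurableSet (⋃₀ S (i + r + 1)) :=
          MeasurableSet.sUnion hfinIr1.countable fun C hC =>
            CondAux.R_meas F R hRE (hmemIr1 C hC).1
        have hdicho : B ∩ ⋃₀ S (i + r) = ⋃₀ 𝒞 := by
          ext x
          constructor
          · rintro ⟨hxB, C0, hC0, hxC0⟩
            have hC0G : C0 ∈ Paper.Gk R (i + r) I0 := hsubIr hC0
            rw [CondAux.Gk_add R i r I0] at hC0G
            simp only [Set.mem_iUnion, exists_prop] at hC0G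
            obtain ⟨B', hB', hC0B'⟩ := hC0G
            have hC0subB' : C0 ⊆ B' := CondAux.Gk_sub R r B' C0 hC0B'
            have hBB' : B = B' := by
              by_contra hne
              have hd : Disjoint B B' :=
                CondAux.Gk_disj R hnest I0 i (hsubI hB) hB' hne
              exact Set.disjoint_left.mp hd hxB (hC0subB' hxC0)
            exact ⟨C0, ⟨hC0, hBB' ▸ hC0subB'⟩, hxC0⟩
          · rintro ⟨C, hC, hxC⟩
            exact ⟨hC.2 hxC, C, hC.1, hxC⟩
        have hpownn : (0 : ℝ) ≤ (1 - ε₁) ^ r := pow_nonneg (by linarith) r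
        calc ENNReal.ofReal ((1 - ε₁) ^ (r + 1)) * P B
            = ENNReal.ofReal (1 - ε₁) * (ENNReal.ofReal ((1 - ε₁) ^ r) * P B) := by
              rw [pow_succ, ENNReal.ofReal_mul hpownn]; ring
          _ ≤ ENNReal.ofReal (1 - ε₁) * P (B ∩ ⋃₀ S (i + r)) :=
              mul_le_mul_right (ih i hiN' B hB) _
          _ = ENNReal.ofReal (1 - ε₁) * ∑' C : 𝒞, P (C : Set Ω) := by
              rw [hdicho, measure_sUnion h𝒞cnt (fun a ha b hb hne => h𝒞disj ha hb hne) h𝒞meas]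
          _ = ∑' C : 𝒞, ENNReal.ofReal (1 - ε₁) * P (C : Set Ω) :=
              ENNReal.tsum_mul_left.symm
          _ ≤ ∑' C : 𝒞, P ((C : Set Ω) ∩ ⋃₀ S (i + r + 1)) :=
              ENNReal.tsum_le_tsum fun C => cov (i + r) (by omega) C C.2.1
          _ = P (⋃ C ∈ 𝒞, ((C : Set Ω) ∩ ⋃₀ S (i + r + 1))) := by
              have hd2 : 𝒞.PairwiseDisjoint (fun C : Set Ω => C ∩ ⋃₀ S (i + r + 1)) :=
                fun a ha b hb hne =>
                  (h𝒞disj ha hb hne).mono Set.inter_subset_left Set.inter_subset_left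
              rw [measure_biUnion h𝒞cnt hd2
                (fun C hC => (h𝒞meas C hC).inter hU1meas)]
          _ ≤ P (B ∩ ⋃₀ S (i + r + 1)) := by
              refine measure_mono ?_
              intro x hx
              simp only [Set.mem_iUnion, exists_prop] at hx
              obtain ⟨C, hC, hxC, hxU⟩ := hx
              exact ⟨hC.2 hxC, hxU⟩
  -- the conclusion
  refine ⟨fun j => S (k * j), I0, hI0R, ?_, ?_, ?_, ?_⟩
  · simpa using hS0
  · intro j hj1 hjn
    have hkjN : k * j ≤ N := by
      calc k * j ≤ k * n := Nat.mul_le_mul_left k hjn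
        _ = N := by rw [hNdef, Nat.mul_comm]
    exact (inv (k * j) hkjN).2.1
  · intro j hj1 hjn A hA
    obtain ⟨j', rfl⟩ : ∃ j', j = j' + 1 := ⟨j - 1, by omega⟩
    simp only [Nat.add_sub_cancel] at hA
    have hidx : k * j' + k = k * (j' + 1) := (Nat.mul_succ k j').symm
    have hkjN : k * (j' + 1) ≤ N := by
      calc k * (j' + 1) ≤ k * n := Nat.mul_le_mul_left k hjn
        _ = N := by rw [hNdef, Nat.mul_comm]
    have hkj1N : k * j' ≤ N :=
      le_trans (Nat.mul_le_mul_left k (by omega)) hkjN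
    have hAR : A ∈ R := ((inv (k * j') hkj1N).2.2 A hA).1
    have hcomp := comp k (k * j') (by rw [hidx]; exact hkjN) A hA
    rw [hidx] at hcomp
    have hb1 : (1 : ℝ) - ε' ≤ (1 - ε₁) ^ k := by
      have hB := one_add_mul_le_pow (a := -ε₁) (by linarith) k
      have heq : (1 : ℝ) + (k : ℝ) * (-ε₁) = 1 - ε' := by rw [← hkε₁]; ring
      calc (1 : ℝ) - ε' = 1 + (k : ℝ) * (-ε₁) := heq.symm
        _ ≤ (1 + -ε₁) ^ k := hB
        _ = (1 - ε₁) ^ k := by ring_nf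
    have hpp : (0 : ℝ) < (1 - ε₁) ^ k := pow_pos (by linarith) k
    calc ENNReal.ofReal (1 - ε) * P A < ENNReal.ofReal ((1 - ε₁) ^ k) * P A :=
          (ENNReal.mul_lt_mul_iff_left (hRpos hAR) (hRtop A)).2
            ((ENNReal.ofReal_lt_ofReal_iff hpp).2 (by linarith))
      _ ≤ P (A ∩ ⋃₀ S (k * (j' + 1))) := hcomp
  · intro j hj1 hjn
    have hkjN : k * j ≤ N := by
      calc k * j ≤ k * n := Nat.mul_le_mul_left k hjn
        _ = N := by rw [hNdef, Nat.mul_comm]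
    exact (inv (k * j) hkjN).1
end
end

section
/- Let R be a nested collection of measurable subsets of positive measure of a probability space (Ω, F, P) with finite Carleson constant [[R]] < ∞, and set M = ⌊4[[R]] + 1⌋. Then there exist pairwise disjoint families R_0, R_1, …, R_{M−1} such that R = R_0 ∪ R_1 ∪ … ∪ R_{M−1} and, for every j ∈ {0, …, M−1} and every A ∈ R_j, ∑_{J ∈ G_1(R_j, A)} P(J) ≤ P(A)/2. -/
open MeasureTheory ENNReal

noncomputable section

section AuxStatement9

open MeasureTheory ENNReal

variable {Ω : Type*} [m0 : MeasurableSpace Ω] {P : Measure Ω}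

/-- Any finite subfamily of `R` consisting of subsets of `A ∈ R` has total measure at most
`[[R]] * P A`. -/
lemma aux_sum_le_carleson [IsProbabilityMeasure P] {R : Set (Set Ω)}
    (hpos : ∀ A ∈ R, 0 < P A) {A : Set Ω} (hA : A ∈ R)
    (t : Finset (Set Ω)) (ht : ∀ B ∈ t, B ∈ R ∧ B ⊆ A) :
    ∑ B ∈ t, P B ≤ Paper.carleson P R * P A := by
  have hPA0 : P A ≠ 0 := (hpos A hA).ne'
  have hPAtop : P A ≠ ⊤ := measure_ne_top P A
  have h1 : ∑ B ∈ t, P B ≤ ∑' J : {J : Set Ω // J ∈ R ∧ J ⊆ A}, P (J : Set Ω) := by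
    have hinj : Function.Injective
        (fun b : {x // x ∈ t} => (⟨b.1, ht b.1 b.2⟩ : {J : Set Ω // J ∈ R ∧ J ⊆ A})) := by
      intro x y h
      simp only [Subtype.mk.injEq] at h
      exact Subtype.ext h
    have heq : ∑ B ∈ t, P B
        = ∑ b ∈ t.attach.map ⟨fun b => (⟨b.1, ht b.1 b.2⟩ : {J : Set Ω // J ∈ R ∧ J ⊆ A}), hinj⟩,
            P (b : Set Ω) := by
      rw [Finset.sum_map]
      exact (Finset.sum_attach t fun B => P B).symm
    rw [heq]
    exact ENNReal.sum_le_tsum _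
  have h2 : (P A)⁻¹ * ∑' J : {J : Set Ω // J ∈ R ∧ J ⊆ A}, P (J : Set Ω) ≤ Paper.carleson P R :=
    le_iSup₂ (f := fun I (_ : I ∈ R) =>
      (P I)⁻¹ * ∑' J : {J : Set Ω // J ∈ R ∧ J ⊆ I}, P (J : Set Ω)) A hA
  have h3 : ∑' J : {J : Set Ω // J ∈ R ∧ J ⊆ A}, P (J : Set Ω) ≤ Paper.carleson P R * P A := by
    have h4 := mul_le_mul_right h2 (P A)
    rwa [← mul_assoc, ENNReal.mul_inv_cancel hPA0 hPAtop, one_mul, mul_comm (P A)] at h4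
  exact h1.trans h3

/-- Every member of a nested Carleson family has finitely many ancestors in the family. -/
lemma aux_anc_finite [IsProbabilityMeasure P] {R : Set (Set Ω)}
    (hpos : ∀ A ∈ R, 0 < P A) (hnest : Paper.Nested R)
    (hfin : Paper.carleson P R ≠ ⊤) {X : Set Ω} (hX : X ∈ R) :
    {B | B ∈ R ∧ X ⊆ B}.Finite := by
  by_contra h
  have hinf : {B | B ∈ R ∧ X ⊆ B}.Infinite := h
  have hXne : X.Nonempty := by
    rcases Set.eq_empty_or_nonempty X with h0 | h0
    · exact absurd (hpos X hX) (by simp [h0])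
    · exact h0
  obtain ⟨n, hn⟩ : ∃ n : ℕ, Paper.carleson P R < n * P X :=
    ENNReal.exists_nat_mul_gt (hpos X hX).ne' hfin
  obtain ⟨t, hts, htc⟩ := hinf.exists_subset_card_eq (n + 1)
  have htne : t.Nonempty := Finset.card_pos.mp (by omega)
  obtain ⟨Bm, hBm, hmax⟩ := t.exists_maximal htne
  have hBmR : Bm ∈ R := (hts hBm).1
  have hchain : ∀ B ∈ t, B ⊆ Bm := by
    intro B hB
    have hBR : B ∈ R := (hts hB).1
    have hne : (B ∩ Bm).Nonempty := ⟨hXne.some, (hts hB).2 hXne.some_mem, (hts hBm).2 hXne.some_mem⟩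
    rcases hnest B hBR Bm hBmR hne with hsub | hsub
    · exact hsub
    · have : ¬ Bm < B := fun hlt => hlt.2 (hmax hB hlt.1)
      have hle : B ≤ Bm := by
        by_contra hnb
        exact this (lt_of_le_not_ge hsub hnb)
      exact hle
  have hbig : (↑(n + 1) : ℝ≥0∞) * P X ≤ ∑ B ∈ t, P B := by
    calc (↑(n + 1) : ℝ≥0∞) * P X = ∑ _B ∈ t, P X := by
          rw [Finset.sum_const, htc, nsmul_eq_mul]
      _ ≤ ∑ B ∈ t, P B := Finset.sum_le_sum fun B hB => measure_mono ((hts hB).2)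
  have hsmall : ∑ B ∈ t, P B ≤ Paper.carleson P R := by
    have := aux_sum_le_carleson hpos hBmR t (fun B hB => ⟨(hts hB).1, hchain B hB⟩)
    calc ∑ B ∈ t, P B ≤ Paper.carleson P R * P Bm := this
      _ ≤ Paper.carleson P R * 1 := mul_le_mul_right prob_le_one _
      _ = Paper.carleson P R := mul_one _
  have hmono : (↑n : ℝ≥0∞) * P X ≤ (↑(n + 1) : ℝ≥0∞) * P X :=
    mul_le_mul_left (by exact_mod_cast Nat.cast_le.mpr (Nat.le_succ n)) _
  exact absurd (hmono.trans (hbig.trans hsmall)) (not_le.mpr hn)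

end AuxStatement9

open MeasureTheory ENNReal in
/-- Carleson–Garnett disjointification. -/
theorem statement_9 {Ω : Type*} [m0 : MeasurableSpace Ω] (P : Measure Ω)
    [IsProbabilityMeasure P]
    (R : Set (Set Ω)) (hmeas : ∀ A ∈ R, MeasurableSet A) (hpos : ∀ A ∈ R, 0 < P A)
    (hnest : Paper.Nested R) (hfin : Paper.carleson P R ≠ ⊤) :
    ∃ Rs : ℕ → Set (Set Ω),
      (∀ i j, i ≠ j → Disjoint (Rs i) (Rs j)) ∧
      R = ⋃ i ∈ Finset.range ⌊4 * (Paper.carleson P R).toReal + 1⌋₊, Rs i ∧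
      (∀ i, ∀ A ∈ Rs i, ∑' J : Paper.G1 (Rs i) A, P (J : Set Ω) ≤ P A / 2) := by
    classical
  set Λ := Paper.carleson P R with hΛdef
  set M := ⌊4 * Λ.toReal + 1⌋₊ with hMdef
  have hΛ0 : 0 ≤ Λ.toReal := ENNReal.toReal_nonneg
  have hMgt : 4 * Λ.toReal < (M : ℝ) := by
    have h := Nat.sub_one_lt_floor (4 * Λ.toReal + 1)
    rw [← hMdef] at h
    linarith
  have hM1 : 1 ≤ M := by
    rw [hMdef]
    exact Nat.le_floor (by push_cast; linarith)
  have hM0 : (M : ℝ≥0∞) ≠ 0 := by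
    exact Nat.cast_ne_zero.mpr (by omega)
  have hMtop : (M : ℝ≥0∞) ≠ ⊤ := ENNReal.natCast_ne_top M
  have h2Λ : 2 * Λ ≤ (M : ℝ≥0∞) := by
    have he : (2 : ℝ≥0∞) * Λ = ENNReal.ofReal (2 * Λ.toReal) := by
      rw [ENNReal.ofReal_mul (by norm_num), ENNReal.ofReal_ofNat, ENNReal.ofReal_toReal hfin]
    rw [he]
    calc ENNReal.ofReal (2 * Λ.toReal) ≤ ENNReal.ofReal (M : ℝ) :=
          ENNReal.ofReal_le_ofReal (by linarith)
      _ = (M : ℝ≥0∞) := ENNReal.ofReal_natCast M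
  -- the ancestor-counting function
  set ℓ : Set Ω → ℕ := fun X => {B | B ∈ R ∧ X ⊆ B}.ncard with hℓdef
  have hancfin : ∀ X ∈ R, {B | B ∈ R ∧ X ⊆ B}.Finite :=
    fun X hX => aux_anc_finite hpos hnest hfin hX
  refine ⟨fun j => if j < M then {X | X ∈ R ∧ ℓ X % M = j} else ∅, ?_, ?_, ?_⟩
  · -- pairwise disjoint
    intro i j hij
    rw [Set.disjoint_left]
    intro X hXi hXj
    simp only [] at hXi hXj
    by_cases hi : i < M
    · by_cases hj : j < M
      · rw [if_pos hi] at hXi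
        rw [if_pos hj] at hXj
        exact hij (hXi.2 ▸ hXj.2)
      · rw [if_neg hj] at hXj
        exact hXj
    · rw [if_neg hi] at hXi
      exact hXi
  · -- union
    ext X
    simp only [Set.mem_iUnion, Finset.mem_range]
    constructor
    · intro hX
      have hlt : ℓ X % M < M := Nat.mod_lt _ (by omega)
      refine ⟨ℓ X % M, hlt, ?_⟩
      simp only [if_pos hlt]
      exact ⟨hX, rfl⟩
    · rintro ⟨i, hi, hXi⟩
      simp only [if_pos hi] at hXi
      exact hXi.1
  · -- the G1 bound
    intro i A hA
    by_cases hi : i < M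
    swap
    · simp only [if_neg hi] at hA
      exact absurd hA (Set.notMem_empty A)
    simp only [if_pos hi] at hA
    show ∑' J : ↑(Paper.G1 (if i < M then {X | X ∈ R ∧ ℓ X % M = i} else ∅) A),
      P (J : Set Ω) ≤ P A / 2
    rw [if_pos hi]
    obtain ⟨hAR, hAmod⟩ := hA
    have hPA0 : P A ≠ 0 := (hpos A hAR).ne'
    -- abbreviation for the class
    set Ri : Set (Set Ω) := {X | X ∈ R ∧ ℓ X % M = i} with hRidef
    -- elements of G1 are disjoint
    have hG1disj : ∀ J ∈ Paper.G1 Ri A, ∀ J' ∈ Paper.G1 Ri A, J ≠ J' → Disjoint J J' := by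
      intro J hJ J' hJ' hne
      by_contra hd
      rw [Set.not_disjoint_iff_nonempty_inter] at hd
      rcases hnest J hJ.1.1 J' hJ'.1.1 hd with hsub | hsub
      · exact hne (hJ.2.2 J' hJ'.1 hJ'.2.1 hsub)
      · exact hne ((hJ'.2.2 J hJ.1 hJ.2.1 hsub).symm)
    rw [ENNReal.tsum_eq_iSup_sum]
    refine iSup_le fun s => ?_
    -- intermediate ancestor sets
    have hmem : ∀ j : ↥(Paper.G1 Ri A), (j : Set Ω) ∈ Ri := fun j => j.2.1
    have hJR : ∀ j : ↥(Paper.G1 Ri A), (j : Set Ω) ∈ R := fun j => (hmem j).1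
    have hJssA : ∀ j : ↥(Paper.G1 Ri A), (j : Set Ω) ⊂ A := fun j => j.2.2.1
    set S : ↥(Paper.G1 Ri A) → Set (Set Ω) :=
      fun j => {B | B ∈ R ∧ (j : Set Ω) ⊆ B ∧ B ⊆ A ∧ B ≠ A} with hSdef
    have hSsub : ∀ j, S j ⊆ {B | B ∈ R ∧ (j : Set Ω) ⊆ B} := fun j B hB => ⟨hB.1, hB.2.1⟩
    have hSfin : ∀ j, (S j).Finite := fun j => (hancfin _ (hJR j)).subset (hSsub j)
    -- cardinality of the intermediate set
    have hcard : ∀ j, M ≤ (S j).ncard := by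
      intro j
      have hJvR := hJR j
      have hJvA := (hJssA j).subset
      have hJvne : (j : Set Ω).Nonempty := by
        rcases Set.eq_empty_or_nonempty (j : Set Ω) with h0 | h0
        · exact absurd (hpos _ hJvR) (by simp [h0])
        · exact h0
      have hAnsubJ : ¬ A ⊆ (j : Set Ω) :=
        fun h => (hJssA j).ne (subset_antisymm hJvA h)
      have hancsub : {B | B ∈ R ∧ A ⊆ B} ⊆ {B | B ∈ R ∧ (j : Set Ω) ⊆ B} :=
        fun B hB => ⟨hB.1, hJvA.trans hB.2⟩
      have hSeq : S j = {B | B ∈ R ∧ (j : Set Ω) ⊆ B} \ {B | B ∈ R ∧ A ⊆ B} := by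
        ext B
        constructor
        · rintro ⟨hBR, hJB, hBA, hBne⟩
          exact ⟨⟨hBR, hJB⟩, fun hB2 => hBne (subset_antisymm hBA hB2.2)⟩
        · rintro ⟨⟨hBR, hJB⟩, hB2⟩
          have hABn : ¬ A ⊆ B := fun hAB => hB2 ⟨hBR, hAB⟩
          have hne2 : (B ∩ A).Nonempty :=
            ⟨hJvne.some, hJB hJvne.some_mem, hJvA hJvne.some_mem⟩
          rcases hnest B hBR A hAR hne2 with hsub | hsub
          · exact ⟨hBR, hJB, hsub, fun hBA => hABn (hBA ▸ subset_refl A)⟩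
          · exact absurd hsub hABn
      have hanclt : ℓ A < ℓ (j : Set Ω) := by
        refine Set.ncard_lt_ncard ?_ (hancfin _ hJvR)
        rw [Set.ssubset_iff_of_subset hancsub]
        exact ⟨(j : Set Ω), ⟨hJvR, subset_refl _⟩, fun hc => hAnsubJ hc.2⟩
      have hmodeq : ℓ A % M = ℓ (j : Set Ω) % M := by
        rw [hAmod, (hmem j).2]
      have hdvd : M ∣ ℓ (j : Set Ω) - ℓ A := (Nat.modEq_iff_dvd' hanclt.le).mp hmodeq
      have hM_le : M ≤ ℓ (j : Set Ω) - ℓ A := Nat.le_of_dvd (by omega) hdvd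
      have hSn : (S j).ncard = ℓ (j : Set Ω) - ℓ A := by
        rw [hSeq, Set.ncard_diff hancsub (hancfin A hAR)]
      omega
    -- finsets
    set SF : ↥(Paper.G1 Ri A) → Finset (Set Ω) := fun j => (hSfin j).toFinset with hSFdef
    have hSFmem : ∀ j B, B ∈ SF j ↔ B ∈ S j := fun j B => (hSfin j).mem_toFinset
    have hSFcard : ∀ j, M ≤ (SF j).card := by
      intro j
      have hc := hcard j
      rwa [Set.ncard_eq_toFinset_card _ (hSfin j)] at hc
    set U : Finset (Set Ω) := s.biUnion SF with hUdef
    -- double counting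
    have step1 : (M : ℝ≥0∞) * ∑ j ∈ s, P (j : Set Ω) ≤ ∑ B ∈ U, P B := by
      rw [Finset.mul_sum]
      calc ∑ j ∈ s, (M : ℝ≥0∞) * P (j : Set Ω)
          ≤ ∑ j ∈ s, ∑ _B ∈ SF j, P (j : Set Ω) := by
            refine Finset.sum_le_sum fun j hj => ?_
            rw [Finset.sum_const, nsmul_eq_mul]
            exact mul_le_mul_left (by exact_mod_cast hSFcard j) _
        _ = ∑ j ∈ s, ∑ B ∈ U, (if B ∈ SF j then P (j : Set Ω) else 0) := by
            refine Finset.sum_congr rfl fun j hj => ?_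
            rw [Finset.sum_ite_mem, Finset.inter_eq_right.mpr (Finset.subset_biUnion_of_mem SF hj)]
        _ = ∑ B ∈ U, ∑ j ∈ s, (if B ∈ SF j then P (j : Set Ω) else 0) := Finset.sum_comm
        _ ≤ ∑ B ∈ U, P B := by
            refine Finset.sum_le_sum fun B hB => ?_
            rw [← Finset.sum_filter]
            set s' := s.filter (fun j => B ∈ SF j) with hs'def
            have hpw : (↑s' : Set ↥(Paper.G1 Ri A)).PairwiseDisjoint
                (fun j : ↥(Paper.G1 Ri A) => (j : Set Ω)) := by
              intro x _ y _ hxy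
              exact hG1disj _ x.2 _ y.2 (Subtype.coe_injective.ne hxy)
            have hmeas' : ∀ j ∈ s', MeasurableSet (j : Set Ω) :=
              fun j _ => hmeas _ (hJR j)
            calc ∑ j ∈ s', P (j : Set Ω) = P (⋃ j ∈ s', (j : Set Ω)) :=
                  (measure_biUnion_finset hpw hmeas').symm
              _ ≤ P B := by
                  refine measure_mono (Set.iUnion₂_subset fun j hj => ?_)
                  have hBS : B ∈ S j := (hSFmem j B).mp (Finset.mem_filter.mp hj).2
                  exact hBS.2.1
    have step2 : ∑ B ∈ U, P B ≤ Λ * P A := by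
      refine aux_sum_le_carleson hpos hAR U fun B hB => ?_
      obtain ⟨j, hj, hBj⟩ := Finset.mem_biUnion.mp hB
      have hBS : B ∈ S j := (hSFmem j B).mp hBj
      exact ⟨hBS.1, hBS.2.2.1⟩
    -- conclude
    have step3 : (M : ℝ≥0∞) * (2 * ∑ j ∈ s, P (j : Set Ω)) ≤ (M : ℝ≥0∞) * P A := by
      calc (M : ℝ≥0∞) * (2 * ∑ j ∈ s, P (j : Set Ω))
          = 2 * ((M : ℝ≥0∞) * ∑ j ∈ s, P (j : Set Ω)) := by ring
        _ ≤ 2 * (Λ * P A) := mul_le_mul_right (step1.trans step2) 2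
        _ = (2 * Λ) * P A := by ring
        _ ≤ (M : ℝ≥0∞) * P A := mul_le_mul_left h2Λ _
    have step4 : 2 * ∑ j ∈ s, P (j : Set Ω) ≤ P A :=
      (ENNReal.mul_le_mul_iff_right hM0 hMtop).mp step3
    rw [ENNReal.le_div_iff_mul_le (Or.inl two_ne_zero) (Or.inl ENNReal.ofNat_ne_top)]
    rw [mul_comm]
    exact step4
end
end
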